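/- arXiv:1711.00563 — 3 statements merged into one kernel-verified Lean document; each statement's English description precedes it below -/
import Mathlib

section
/- Let A be either the set W₊² or the set W_M, and let φ : ℝ²ⁿ → ℝ²ⁿ be a C¹ diffeomorphism with Jacobian J(z) = |det Dφ(z)|. If the map U_φ defined by (U_φF)(z) = J(z)·F(φ(z)) satisfies U_φF ∈ A for every F ∈ A, then J(z) ≤ 1 for all z ∈ ℝ²ⁿ. -/
open MeasureTheory Complex Filter Matrix

noncomputable section

/-- Configuration space ℝⁿ. -/
abbrev Cfg (n : ℕ) := Fin n → ℝ

/-- Phase space ℝ²ⁿ = ℝⁿ × ℝⁿ, indexed by `Fin n ⊕ Fin n`. -/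
abbrev Phase (n : ℕ) := (Fin n ⊕ Fin n) → ℝ

/-- The cross-Wigner transform. -/
def wigner (n : ℕ) (f g : Cfg n → ℂ) (z : Phase n) : ℂ :=
  ∫ y : Cfg n,
    f (fun i => z (Sum.inl i) + y i / 2) *
      (starRingEnd ℂ) (g (fun i => z (Sum.inl i) - y i / 2)) *
      Complex.exp (-2 * Real.pi * Complex.I *
        ((∑ i, z (Sum.inr i) * y i : ℝ) : ℂ))

/-- The Heisenberg–Weyl operator ρ(z₀). -/
def heisenbergWeyl (n : ℕ) (z₀ : Phase n) (f : Cfg n → ℂ) : Cfg n → ℂ :=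
  fun x => Complex.exp (2 * Real.pi * Complex.I *
      ((∑ i, z₀ (Sum.inr i) * (x i - z₀ (Sum.inl i) / 2) : ℝ) : ℂ)) *
    f (fun i => x i - z₀ (Sum.inl i))

/-- The standard symplectic matrix J. -/
def Jmat (n : ℕ) : Matrix (Fin n ⊕ Fin n) (Fin n ⊕ Fin n) ℝ :=
  Matrix.fromBlocks 0 1 (-1) 0

def IsSymplecticMat (n : ℕ) (M : Matrix (Fin n ⊕ Fin n) (Fin n ⊕ Fin n) ℝ) : Prop :=
  Mᵀ * Jmat n * M = Jmat n

def IsAntisymplecticMat (n : ℕ) (M : Matrix (Fin n ⊕ Fin n) (Fin n ⊕ Fin n) ℝ) : Prop :=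
  Mᵀ * Jmat n * M = -(Jmat n)

def InSpT (n : ℕ) (M : Matrix (Fin n ⊕ Fin n) (Fin n ⊕ Fin n) ℝ) : Prop :=
  IsSymplecticMat n M ∨ IsAntisymplecticMat n M

def InSpPlus (n : ℕ) (M : Matrix (Fin n ⊕ Fin n) (Fin n ⊕ Fin n) ℝ) : Prop :=
  IsSymplecticMat n M ∧ M.IsSymm ∧ M.PosDef

/-- Jacobian. -/
def jac (n : ℕ) (φ : Phase n → Phase n) (z : Phase n) : ℝ :=
  |(fderiv ℝ φ z).det|

/-- U_φ. -/
def Uφ (n : ℕ) (φ : Phase n → Phase n) (F : Phase n → ℂ) (z : Phase n) : ℂ :=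
  (jac n φ z : ℂ) * F (φ z)

/-- The set W₊². -/
def WplusTwo (n : ℕ) : Set (Phase n → ℂ) :=
  {F | ∃ f : Cfg n → ℂ, MemLp f 2 (volume : Measure (Cfg n)) ∧
    eLpNorm f 2 (volume : Measure (Cfg n)) = 1 ∧ F = wigner n f f}

/-- The set W². -/
def Wtwo (n : ℕ) : Set (Phase n → ℂ) :=
  {F | ∃ f g : Cfg n → ℂ, MemLp f 2 (volume : Measure (Cfg n)) ∧
    MemLp g 2 (volume : Measure (Cfg n)) ∧ F = wigner n f g}

/-- Orthonormal family in L²(ℝⁿ). -/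
def IsONFamily (n : ℕ) (f : ℕ → Cfg n → ℂ) : Prop :=
  (∀ α, MemLp (f α) 2 (volume : Measure (Cfg n))) ∧
  ∀ α β, (∫ x, f α x * (starRingEnd ℂ) (f β x)) = if α = β then 1 else 0

/-- The set W_M of Wigner functions of density matrices. -/
def WM (n : ℕ) : Set (Phase n → ℂ) :=
  {F | ∃ (p : ℕ → ℝ) (f : ℕ → Cfg n → ℂ),
    IsONFamily n f ∧ (∀ α, 0 ≤ p α) ∧ HasSum p 1 ∧
    TendstoUniformly
      (fun N z => ∑ α ∈ Finset.range N, (p α : ℂ) * wigner n (f α) (f α) z) F atTop ∧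
    Tendsto
      (fun N => eLpNorm
        (fun z => F z - ∑ α ∈ Finset.range N, (p α : ℂ) * wigner n (f α) (f α) z)
        2 (volume : Measure (Phase n))) atTop (nhds 0)}



/-! ### Auxiliary development -/

section Aux

lemma integral_ofReal' {α : Type*} [MeasurableSpace α] {μ : Measure α} (f : α → ℝ) :
    ∫ x, ((f x : ℝ) : ℂ) ∂μ = ((∫ x, f x ∂μ : ℝ) : ℂ) :=
  Complex.ofRealLI.integral_comp_comm f

/-- Modulated translated real envelope state. -/
def mstate (n : ℕ) (z₀ : Phase n) (e : Cfg n → ℝ) : Cfg n → ℂ :=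
  heisenbergWeyl n z₀ (fun v => ((e v : ℝ) : ℂ))

lemma norm_mstate (n : ℕ) (z₀ : Phase n) (e : Cfg n → ℝ) (x : Cfg n) :
    ‖mstate n z₀ e x‖ = |e (fun i => x i - z₀ (Sum.inl i))| := by
  simp only [mstate, heisenbergWeyl]
  rw [norm_mul]
  have h0 : (2 * (Real.pi:ℂ) * Complex.I *
      ((∑ i, z₀ (Sum.inr i) * (x i - z₀ (Sum.inl i) / 2) : ℝ) : ℂ)).re = 0 := by
    simp [Complex.mul_re, Complex.mul_im]
  rw [Complex.norm_exp, h0, Real.exp_zero, one_mul,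
    Complex.norm_real, Real.norm_eq_abs]

lemma mstate_mul_conj (n : ℕ) (z₀ : Phase n) (e₁ e₂ : Cfg n → ℝ) (x : Cfg n) :
    mstate n z₀ e₁ x * (starRingEnd ℂ) (mstate n z₀ e₂ x) =
      ((e₁ (fun i => x i - z₀ (Sum.inl i)) * e₂ (fun i => x i - z₀ (Sum.inl i)) : ℝ) : ℂ) := by
  simp only [mstate, heisenbergWeyl]
  rw [_root_.map_mul, Complex.conj_ofReal, mul_mul_mul_comm]
  have h1 : Complex.exp (2 * (Real.pi:ℂ) * Complex.I *
        ((∑ i, z₀ (Sum.inr i) * (x i - z₀ (Sum.inl i) / 2) : ℝ) : ℂ)) *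
      (starRingEnd ℂ) (Complex.exp (2 * (Real.pi:ℂ) * Complex.I *
        ((∑ i, z₀ (Sum.inr i) * (x i - z₀ (Sum.inl i) / 2) : ℝ) : ℂ))) = 1 := by
    rw [← Complex.exp_conj, ← Complex.exp_add]
    have h2 : (2 * (Real.pi:ℂ) * Complex.I *
          ((∑ i, z₀ (Sum.inr i) * (x i - z₀ (Sum.inl i) / 2) : ℝ) : ℂ)) +
        (starRingEnd ℂ) (2 * (Real.pi:ℂ) * Complex.I *
          ((∑ i, z₀ (Sum.inr i) * (x i - z₀ (Sum.inl i) / 2) : ℝ) : ℂ)) = 0 := by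
      simp only [_root_.map_mul, Complex.conj_I, Complex.conj_ofReal, map_ofNat]
      ring
    rw [h2, Complex.exp_zero]
  rw [h1, one_mul, ← Complex.ofReal_mul]

lemma integral_mstate_mul_conj (n : ℕ) (z₀ : Phase n) (e₁ e₂ : Cfg n → ℝ) :
    ∫ x, mstate n z₀ e₁ x * (starRingEnd ℂ) (mstate n z₀ e₂ x) =
      ((∫ u, e₁ u * e₂ u : ℝ) : ℂ) := by
  simp_rw [mstate_mul_conj]
  rw [integral_ofReal', Complex.ofReal_inj]
  exact integral_sub_right_eq_self (fun u : Cfg n => e₁ u * e₂ u)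
    (fun i => z₀ (Sum.inl i))

lemma integral_sq_norm_mstate (n : ℕ) (z₀ : Phase n) (e : Cfg n → ℝ) :
    ∫ x, ‖mstate n z₀ e x‖ ^ 2 = ∫ u, (e u) ^ 2 := by
  simp_rw [norm_mstate, _root_.sq_abs]
  exact integral_sub_right_eq_self (fun u : Cfg n => (e u) ^ 2)
    (fun i => z₀ (Sum.inl i))

lemma measurable_mstate (n : ℕ) (z₀ : Phase n) (e : Cfg n → ℝ) (he : Measurable e) :
    Measurable (mstate n z₀ e) := by
  simp only [mstate, heisenbergWeyl]
  have hS : Measurable (fun x : Cfg n =>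
      (∑ i, z₀ (Sum.inr i) * (x i - z₀ (Sum.inl i) / 2) : ℝ)) := by
    apply Finset.measurable_sum
    intro i _
    exact ((measurable_pi_apply i).sub measurable_const).const_mul _
  have h1 : Measurable (fun x : Cfg n => Complex.exp (2 * (Real.pi:ℂ) * Complex.I *
      ((∑ i, z₀ (Sum.inr i) * (x i - z₀ (Sum.inl i) / 2) : ℝ) : ℂ))) :=
    Complex.measurable_exp.comp ((Complex.measurable_ofReal.comp hS).const_mul _)
  have h2 : Measurable (fun x : Cfg n => ((e (fun i => x i - z₀ (Sum.inl i)) : ℝ) : ℂ)) := by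
    apply Complex.measurable_ofReal.comp
    apply he.comp
    exact measurable_pi_lambda _ fun i => (measurable_pi_apply i).sub measurable_const
  exact h1.mul h2

lemma memLp_mstate (n : ℕ) (z₀ : Phase n) (e : Cfg n → ℝ) (he : Measurable e)
    (hei : Integrable (fun u => (e u) ^ 2) (volume : Measure (Cfg n))) :
    MemLp (mstate n z₀ e) 2 (volume : Measure (Cfg n)) := by
  have hm : AEStronglyMeasurable (mstate n z₀ e) (volume : Measure (Cfg n)) :=
    (measurable_mstate n z₀ e he).aestronglyMeasurable
  rw [memLp_two_iff_integrable_sq_norm hm]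
  have heq : (fun x : Cfg n => ‖mstate n z₀ e x‖ ^ 2) =
      fun x => (fun u : Cfg n => (e u) ^ 2) (x - fun i => z₀ (Sum.inl i)) := by
    funext x
    rw [norm_mstate, _root_.sq_abs]
    rfl
  rw [heq]
  exact hei.comp_sub_right (fun i => z₀ (Sum.inl i))

lemma eLpNorm_eq_one_of_integral_sq (n : ℕ) (f : Cfg n → ℂ)
    (hf : MemLp f 2 (volume : Measure (Cfg n)))
    (h : ∫ x, ‖f x‖ ^ 2 = 1) : eLpNorm f 2 (volume : Measure (Cfg n)) = 1 := by
  rw [hf.eLpNorm_eq_integral_rpow_norm two_ne_zero ENNReal.ofNat_ne_top]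
  have htr : ((2:ENNReal)).toReal = (2:ℝ) := by norm_num
  rw [htr]
  have h2 : ∀ x : Cfg n, ‖f x‖ ^ (2:ℝ) = ‖f x‖ ^ (2:ℕ) := by
    intro x
    rw [show (2:ℝ) = ((2:ℕ):ℝ) by norm_num, Real.rpow_natCast]
  simp_rw [h2]
  rw [h]
  norm_num

lemma integral_sq_eq_one_of_eLpNorm (n : ℕ) (f : Cfg n → ℂ)
    (hf : MemLp f 2 (volume : Measure (Cfg n)))
    (h : eLpNorm f 2 (volume : Measure (Cfg n)) = 1) : ∫ x, ‖f x‖ ^ 2 = 1 := by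
  have h2 := (hf.eLpNorm_eq_integral_rpow_norm two_ne_zero ENNReal.ofNat_ne_top).symm.trans h
  have htr : ((2:ENNReal)).toReal = (2:ℝ) := by norm_num
  rw [htr] at h2
  have hrw : ∀ x : Cfg n, ‖f x‖ ^ (2:ℝ) = ‖f x‖ ^ (2:ℕ) := by
    intro x
    rw [show (2:ℝ) = ((2:ℕ):ℝ) by norm_num, Real.rpow_natCast]
  simp_rw [hrw] at h2
  rw [ENNReal.ofReal_eq_one] at h2
  have hy : (0:ℝ) ≤ ∫ x, ‖f x‖ ^ (2:ℕ) := integral_nonneg fun x => by positivity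
  have h3 : ((∫ x, ‖f x‖ ^ (2:ℕ)) ^ ((2:ℝ))⁻¹) ^ (2:ℝ) = 1 ^ (2:ℝ) := by rw [h2]
  rw [← Real.rpow_mul hy, inv_mul_cancel₀ (two_ne_zero), Real.rpow_one, Real.one_rpow] at h3
  exact h3

lemma integral_sq_eq_one_of_inner (n : ℕ) (f : Cfg n → ℂ)
    (h : (∫ x, f x * (starRingEnd ℂ) (f x)) = (1 : ℂ)) : ∫ x, ‖f x‖ ^ 2 = 1 := by
  have hpt : ∀ x : Cfg n, f x * (starRingEnd ℂ) (f x) = ((‖f x‖ ^ 2 : ℝ) : ℂ) := by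
    intro x
    rw [Complex.mul_conj']
    push_cast
    ring
  simp_rw [hpt] at h
  rw [integral_ofReal'] at h
  exact_mod_cast h

/-- The fundamental sup-norm bound for the cross-Wigner transform of normalized states. -/
lemma wigner_norm_le (n : ℕ) (f g : Cfg n → ℂ)
    (hf : MemLp f 2 (volume : Measure (Cfg n))) (hg : MemLp g 2 (volume : Measure (Cfg n)))
    (hf2 : ∫ x, ‖f x‖ ^ 2 = 1) (hg2 : ∫ x, ‖g x‖ ^ 2 = 1) (z : Phase n) :
    ‖wigner n f g z‖ ≤ 2 ^ n := by
  classical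
  set x0 : Cfg n := fun i => z (Sum.inl i) with hx0
  set Φ : Cfg n → ℝ := fun u => ‖f (x0 + u)‖ * ‖g (x0 - u)‖ with hΦ
  have hkey : ∀ y : Cfg n,
      ‖f (fun i => z (Sum.inl i) + y i / 2) *
        (starRingEnd ℂ) (g (fun i => z (Sum.inl i) - y i / 2)) *
        Complex.exp (-2 * Real.pi * Complex.I *
          ((∑ i, z (Sum.inr i) * y i : ℝ) : ℂ))‖ = Φ ((2:ℝ)⁻¹ • y) := by
    intro y
    have h1 : ‖Complex.exp (-2 * (Real.pi:ℂ) * Complex.I *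
        ((∑ i, z (Sum.inr i) * y i : ℝ) : ℂ))‖ = 1 := by
      rw [Complex.norm_exp]
      have h0 : (-2 * (Real.pi:ℂ) * Complex.I *
          ((∑ i, z (Sum.inr i) * y i : ℝ) : ℂ)).re = 0 := by
        simp [Complex.mul_re, Complex.mul_im]
      rw [h0, Real.exp_zero]
    have h2 : (fun i => z (Sum.inl i) + y i / 2) = x0 + (2:ℝ)⁻¹ • y := by
      funext i
      simp only [hx0, Pi.add_apply, Pi.smul_apply, smul_eq_mul]
      ring
    have h3 : (fun i => z (Sum.inl i) - y i / 2) = x0 - (2:ℝ)⁻¹ • y := by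
      funext i
      simp only [hx0, Pi.sub_apply, Pi.smul_apply, smul_eq_mul]
      ring
    rw [norm_mul, norm_mul, RCLike.norm_conj, h1, mul_one, h2, h3]
  have step1 : ‖wigner n f g z‖ ≤ ∫ y : Cfg n, Φ ((2:ℝ)⁻¹ • y) := by
    refine (norm_integral_le_integral_norm _).trans_eq ?_
    exact integral_congr_ae (Filter.Eventually.of_forall hkey)
  have hfr : Module.finrank ℝ (Cfg n) = n := by
    simp [Module.finrank_pi]
  have step2 : ∫ y : Cfg n, Φ ((2:ℝ)⁻¹ • y) = (2:ℝ)^n • ∫ u, Φ u := by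
    have h := MeasureTheory.Measure.integral_comp_inv_smul_of_nonneg
      (volume : Measure (Cfg n)) Φ (R := 2) (by norm_num)
    rwa [hfr] at h
  have hpq : (2:ℝ).HolderConjugate 2 := ⟨by norm_num, by norm_num, by norm_num⟩
  have hmf : MemLp (fun u : Cfg n => ‖f (x0 + u)‖) (ENNReal.ofReal 2)
      (volume : Measure (Cfg n)) := by
    rw [show ENNReal.ofReal (2:ℝ) = 2 by norm_num]
    exact (hf.comp_measurePreserving (measurePreserving_add_left volume x0)).norm
  have hpres : MeasurePreserving (fun u : Cfg n => x0 - u) volume volume := by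
    have hcomp := (measurePreserving_add_left (volume : Measure (Cfg n)) x0).comp
      (Measure.measurePreserving_neg (volume : Measure (Cfg n)))
    have : ((fun u : Cfg n => x0 + u) ∘ fun u : Cfg n => -u) = fun u : Cfg n => x0 - u := by
      funext u
      simp [sub_eq_add_neg]
    rwa [this] at hcomp
  have hmg : MemLp (fun u : Cfg n => ‖g (x0 - u)‖) (ENNReal.ofReal 2)
      (volume : Measure (Cfg n)) := by
    rw [show ENNReal.ofReal (2:ℝ) = 2 by norm_num]
    exact (hg.comp_measurePreserving hpres).norm
  have hCS : ∫ u, Φ u ≤ 1 := by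
    have h := integral_mul_le_Lp_mul_Lq_of_nonneg hpq
      (Filter.Eventually.of_forall fun u => norm_nonneg _)
      (Filter.Eventually.of_forall fun u => norm_nonneg _) hmf hmg
    have e1 : ∫ u : Cfg n, ‖f (x0 + u)‖ ^ (2:ℝ) = 1 := by
      have hrw : ∀ u : Cfg n, ‖f (x0 + u)‖ ^ (2:ℝ) = (fun t => ‖f t‖ ^ (2:ℕ)) (x0 + u) := by
        intro u
        rw [show (2:ℝ) = ((2:ℕ):ℝ) by norm_num, Real.rpow_natCast]
      simp_rw [hrw]
      rw [integral_add_left_eq_self (fun t : Cfg n => ‖f t‖ ^ (2:ℕ)) x0]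
      exact hf2
    have e2 : ∫ u : Cfg n, ‖g (x0 - u)‖ ^ (2:ℝ) = 1 := by
      have hrw : ∀ u : Cfg n, ‖g (x0 - u)‖ ^ (2:ℝ) = (fun t => ‖g t‖ ^ (2:ℕ)) (x0 - u) := by
        intro u
        rw [show (2:ℝ) = ((2:ℕ):ℝ) by norm_num, Real.rpow_natCast]
      simp_rw [hrw]
      rw [integral_sub_left_eq_self (fun t : Cfg n => ‖g t‖ ^ (2:ℕ)) volume x0]
      exact hg2
    rw [e1, e2] at h
    simpa using h
  calc ‖wigner n f g z‖ ≤ ∫ y : Cfg n, Φ ((2:ℝ)⁻¹ • y) := step1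
    _ = (2:ℝ)^n • ∫ u, Φ u := step2
    _ ≤ (2:ℝ)^n * 1 := by
        rw [smul_eq_mul]
        exact mul_le_mul_of_nonneg_left hCS (by positivity)
    _ = 2^n := by norm_num

/-- The Gaussian envelope. -/
def genv (n : ℕ) : Cfg n → ℝ :=
  fun v => (Real.sqrt (Real.sqrt 2)) ^ n * Real.exp (-Real.pi * ∑ i, (v i) ^ 2)

lemma integral_gauss_pi (n : ℕ) (c : ℝ) (hc : 0 < c) :
    ∫ v : Cfg n, Real.exp (-c * ∑ i, (v i) ^ 2) = (Real.sqrt (Real.pi / c)) ^ n := by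
  have hpt : ∀ v : Cfg n, Real.exp (-c * ∑ i, (v i) ^ 2) =
      ∏ i, (fun t : ℝ => Real.exp (-c * t ^ 2)) (v i) := by
    intro v
    rw [← Real.exp_sum]
    congr 1
    rw [Finset.mul_sum]
  simp_rw [hpt]
  rw [MeasureTheory.integral_fintype_prod_volume_eq_pow (ι := Fin n) (fun t : ℝ => Real.exp (-c * t ^ 2))]
  rw [integral_gaussian, Fintype.card_fin]

lemma genv_measurable (n : ℕ) : Measurable (genv n) := by
  unfold genv
  apply Measurable.const_mul
  apply Real.measurable_exp.comp
  apply Measurable.const_mul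
  apply Finset.measurable_sum
  intro i _
  exact (measurable_pi_apply i).pow_const 2

lemma genv_sq_pt (n : ℕ) (u : Cfg n) :
    (genv n u) ^ 2 = (Real.sqrt 2) ^ n * Real.exp (-(2 * Real.pi) * ∑ i, (u i) ^ 2) := by
  unfold genv
  rw [mul_pow, ← pow_mul, mul_comm n 2, pow_mul, Real.sq_sqrt (Real.sqrt_nonneg 2),
    sq, ← Real.exp_add]
  congr 1
  ring

lemma genv_sq_integrable (n : ℕ) :
    Integrable (fun u => (genv n u) ^ 2) (volume : Measure (Cfg n)) := by
  have hpt : ∀ u : Cfg n, (genv n u) ^ 2 =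
      ∏ i, (fun t : ℝ => Real.sqrt 2 * Real.exp (-(2 * Real.pi) * t ^ 2)) (u i) := by
    intro u
    rw [genv_sq_pt]
    rw [Finset.prod_mul_distrib, Finset.prod_const, Finset.card_univ, Fintype.card_fin,
      ← Real.exp_sum]
    congr 1
    rw [Finset.mul_sum]
  rw [show (fun u : Cfg n => (genv n u) ^ 2) = _ from funext hpt]
  exact Integrable.fintype_prod (𝕜 := ℝ) fun i =>
    (integrable_exp_neg_mul_sq (by positivity)).const_mul _

lemma genv_sq_integral (n : ℕ) : ∫ u, (genv n u) ^ 2 = 1 := by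
  simp_rw [genv_sq_pt]
  rw [integral_const_mul, integral_gauss_pi n _ (by positivity), ← mul_pow]
  have h1 : Real.pi / (2 * Real.pi) = 1/2 := by
    rw [div_eq_iff (by positivity)]
    ring
  rw [h1]
  have h2 : Real.sqrt 2 * Real.sqrt (1/2) = 1 := by
    rw [← Real.sqrt_mul (by norm_num : (0:ℝ) ≤ 2)]
    norm_num
  rw [h2, one_pow]

lemma phase_cancel (S1 S2 S3 a b : ℝ) (h : S1 = S2 + S3) :
    (Complex.exp (2 * Real.pi * Complex.I * (S1:ℂ)) * (a:ℂ)) *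
      (starRingEnd ℂ) (Complex.exp (2 * Real.pi * Complex.I * (S2:ℂ)) * (b:ℂ)) *
      Complex.exp (-2 * Real.pi * Complex.I * (S3:ℂ)) = ((a * b : ℝ) : ℂ) := by
  rw [_root_.map_mul, Complex.conj_ofReal, ← Complex.exp_conj]
  have hc : (starRingEnd ℂ) (2 * (Real.pi:ℂ) * Complex.I * (S2:ℂ)) =
      -(2 * (Real.pi:ℂ) * Complex.I * (S2:ℂ)) := by
    simp only [_root_.map_mul, Complex.conj_I, Complex.conj_ofReal, map_ofNat]
    ring
  rw [hc]
  have hexp : Complex.exp (2 * (Real.pi:ℂ) * Complex.I * (S1:ℂ)) *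
      Complex.exp (-(2 * (Real.pi:ℂ) * Complex.I * (S2:ℂ))) *
      Complex.exp (-2 * (Real.pi:ℂ) * Complex.I * (S3:ℂ)) = 1 := by
    rw [← Complex.exp_add, ← Complex.exp_add]
    have h' : (S1:ℂ) = (S2:ℂ) + (S3:ℂ) := by exact_mod_cast h
    rw [show 2 * (Real.pi:ℂ) * Complex.I * (S1:ℂ) +
        -(2 * (Real.pi:ℂ) * Complex.I * (S2:ℂ)) +
        -2 * (Real.pi:ℂ) * Complex.I * (S3:ℂ) =
        2 * (Real.pi:ℂ) * Complex.I * ((S1:ℂ) - ((S2:ℂ) + (S3:ℂ))) by ring, h']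
    rw [sub_self, mul_zero, Complex.exp_zero]
  calc (Complex.exp (2 * Real.pi * Complex.I * (S1:ℂ)) * (a:ℂ)) *
      (Complex.exp (-(2 * (Real.pi:ℂ) * Complex.I * (S2:ℂ))) * (b:ℂ)) *
      Complex.exp (-2 * Real.pi * Complex.I * (S3:ℂ)) =
      (Complex.exp (2 * (Real.pi:ℂ) * Complex.I * (S1:ℂ)) *
        Complex.exp (-(2 * (Real.pi:ℂ) * Complex.I * (S2:ℂ))) *
        Complex.exp (-2 * (Real.pi:ℂ) * Complex.I * (S3:ℂ))) * ((a:ℂ) * (b:ℂ)) := by ring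
    _ = ((a * b : ℝ) : ℂ) := by
        rw [hexp, one_mul, ← Complex.ofReal_mul]

/-- The value of the Wigner transform of the coherent state at its center. -/
lemma wigner_cstate (n : ℕ) (z₀ : Phase n) :
    wigner n (mstate n z₀ (genv n)) (mstate n z₀ (genv n)) z₀ = (2 : ℂ) ^ n := by
  have hkey : ∀ y : Cfg n,
      mstate n z₀ (genv n) (fun i => z₀ (Sum.inl i) + y i / 2) *
        (starRingEnd ℂ) (mstate n z₀ (genv n) (fun i => z₀ (Sum.inl i) - y i / 2)) *
        Complex.exp (-2 * Real.pi * Complex.I *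
          ((∑ i, z₀ (Sum.inr i) * y i : ℝ) : ℂ)) =
      ((((Real.sqrt 2) ^ n * Real.exp (-(Real.pi/2) * ∑ i, (y i) ^ 2) : ℝ)) : ℂ) := by
    intro y
    simp only [mstate, heisenbergWeyl]
    have hS : (∑ i, z₀ (Sum.inr i) * ((z₀ (Sum.inl i) + y i / 2) - z₀ (Sum.inl i) / 2) : ℝ) =
        (∑ i, z₀ (Sum.inr i) * ((z₀ (Sum.inl i) - y i / 2) - z₀ (Sum.inl i) / 2) : ℝ) +
        (∑ i, z₀ (Sum.inr i) * y i : ℝ) := by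
      rw [← Finset.sum_add_distrib]
      exact Finset.sum_congr rfl fun i _ => by ring
    rw [phase_cancel _ _ _ _ _ hS]
    rw [Complex.ofReal_inj]
    unfold genv
    have h1 : (∑ i, ((z₀ (Sum.inl i) + y i / 2) - z₀ (Sum.inl i)) ^ 2 : ℝ) =
        (∑ i, (y i) ^ 2) / 4 := by
      rw [Finset.sum_div]
      exact Finset.sum_congr rfl fun i _ => by ring
    have h2 : (∑ i, ((z₀ (Sum.inl i) - y i / 2) - z₀ (Sum.inl i)) ^ 2 : ℝ) =
        (∑ i, (y i) ^ 2) / 4 := by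
      rw [Finset.sum_div]
      exact Finset.sum_congr rfl fun i _ => by ring
    rw [h1, h2]
    have c2 : (Real.sqrt (Real.sqrt 2)) ^ n * (Real.sqrt (Real.sqrt 2)) ^ n =
        (Real.sqrt 2) ^ n := by
      rw [← mul_pow, Real.mul_self_sqrt (Real.sqrt_nonneg 2)]
    have eadd : Real.exp (-Real.pi * ((∑ i, (y i) ^ 2) / 4)) *
        Real.exp (-Real.pi * ((∑ i, (y i) ^ 2) / 4)) =
        Real.exp (-(Real.pi/2) * ∑ i, (y i) ^ 2) := by
      rw [← Real.exp_add]
      congr 1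
      ring
    calc (Real.sqrt (Real.sqrt 2)) ^ n * Real.exp (-Real.pi * ((∑ i, (y i) ^ 2) / 4)) *
        ((Real.sqrt (Real.sqrt 2)) ^ n * Real.exp (-Real.pi * ((∑ i, (y i) ^ 2) / 4))) =
        ((Real.sqrt (Real.sqrt 2)) ^ n * (Real.sqrt (Real.sqrt 2)) ^ n) *
        (Real.exp (-Real.pi * ((∑ i, (y i) ^ 2) / 4)) *
          Real.exp (-Real.pi * ((∑ i, (y i) ^ 2) / 4))) := by ring
      _ = (Real.sqrt 2) ^ n * Real.exp (-(Real.pi/2) * ∑ i, (y i) ^ 2) := by rw [c2, eadd]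
  unfold wigner
  rw [show (fun y : Cfg n => mstate n z₀ (genv n) (fun i => z₀ (Sum.inl i) + y i / 2) *
        (starRingEnd ℂ) (mstate n z₀ (genv n) (fun i => z₀ (Sum.inl i) - y i / 2)) *
        Complex.exp (-2 * Real.pi * Complex.I *
          ((∑ i, z₀ (Sum.inr i) * y i : ℝ) : ℂ))) =
      (fun y : Cfg n => ((((Real.sqrt 2) ^ n *
        Real.exp (-(Real.pi/2) * ∑ i, (y i) ^ 2) : ℝ)) : ℂ)) from funext hkey]
  rw [integral_ofReal', integral_const_mul, integral_gauss_pi n _ (by positivity)]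
  have h1 : Real.pi / (Real.pi/2) = 2 := by
    rw [div_eq_iff (by positivity)]
    ring
  rw [h1, ← mul_pow, Real.mul_self_sqrt (by norm_num : (0:ℝ) ≤ 2)]
  push_cast
  ring

end Aux


section ONFamily

/-- One-dimensional bump with disjoint positive/negative parts. -/
def qfun (α : ℕ) : ℝ → ℝ := fun t =>
  (Set.Ico ((α:ℝ)+1) ((α:ℝ)+2)).indicator 1 t - (Set.Ioc (-((α:ℝ)+2)) (-((α:ℝ)+1))).indicator 1 t

def rfun : ℝ → ℝ := (Set.Icc (-1:ℝ) 1).indicator 1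

def psif (n : ℕ) (i0 : Fin n) (α : ℕ) : Fin n → ℝ → ℝ := fun i => if i = i0 then qfun α else rfun

/-- Odd envelopes orthogonal to each other and to even functions. -/
def hfun (n : ℕ) (i0 : Fin n) (α : ℕ) : Cfg n → ℝ :=
  fun u => ((Real.sqrt 2)⁻¹) ^ n * ∏ i, psif n i0 α i (u i)

lemma qfun_neg (α : ℕ) (t : ℝ) : qfun α (-t) = - qfun α t := by
  have e1 : (-t ∈ Set.Ico ((α:ℝ)+1) ((α:ℝ)+2)) ↔ (t ∈ Set.Ioc (-((α:ℝ)+2)) (-((α:ℝ)+1))) := by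
    simp only [Set.mem_Ico, Set.mem_Ioc]
    constructor <;> intro h <;> constructor <;> linarith [h.1, h.2]
  have e2 : (-t ∈ Set.Ioc (-((α:ℝ)+2)) (-((α:ℝ)+1))) ↔ (t ∈ Set.Ico ((α:ℝ)+1) ((α:ℝ)+2)) := by
    simp only [Set.mem_Ico, Set.mem_Ioc]
    constructor <;> intro h <;> constructor <;> linarith [h.1, h.2]
  simp only [qfun, Set.indicator_apply, Pi.one_apply, e1, e2]
  split_ifs <;> ring

lemma rfun_neg (t : ℝ) : rfun (-t) = rfun t := by
  have e : (-t ∈ Set.Icc (-1:ℝ) 1) ↔ (t ∈ Set.Icc (-1:ℝ) 1) := by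
    simp only [Set.mem_Icc]
    constructor <;> intro h <;> constructor <;> linarith [h.1, h.2]
  simp only [rfun, Set.indicator_apply, Pi.one_apply, e]

lemma qfun_support {α : ℕ} {t : ℝ} (h : qfun α t ≠ 0) : (α:ℝ)+1 ≤ |t| ∧ |t| < (α:ℝ)+2 := by
  unfold qfun at h
  by_cases h1 : t ∈ Set.Ico ((α:ℝ)+1) ((α:ℝ)+2)
  · obtain ⟨ha, hb⟩ := h1
    have ht : 0 ≤ t := le_trans (by positivity) ha
    rw [_root_.abs_of_nonneg ht]
    exact ⟨ha, hb⟩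
  · by_cases h2 : t ∈ Set.Ioc (-((α:ℝ)+2)) (-((α:ℝ)+1))
    · obtain ⟨ha, hb⟩ := h2
      have hα0 : (0:ℝ) ≤ (α:ℝ) := Nat.cast_nonneg α
      have ht : t ≤ 0 := by linarith
      rw [_root_.abs_of_nonpos ht]
      constructor <;> linarith
    · exfalso
      apply h
      rw [Set.indicator_of_notMem h1, Set.indicator_of_notMem h2, sub_zero]

lemma qfun_mul_eq_zero {α β : ℕ} (hαβ : α ≠ β) (t : ℝ) : qfun α t * qfun β t = 0 := by
  by_contra h
  have h1 := qfun_support (left_ne_zero_of_mul h)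
  have h2 := qfun_support (right_ne_zero_of_mul h)
  have c1 : (α:ℝ) < (β:ℝ) + 1 := by linarith [h1.1, h2.2]
  have c2 : (β:ℝ) < (α:ℝ) + 1 := by linarith [h2.1, h1.2]
  have d1 : α < β + 1 := by exact_mod_cast c1
  have d2 : β < α + 1 := by exact_mod_cast c2
  exact hαβ (by omega)

lemma qfun_measurable (α : ℕ) : Measurable (qfun α) :=
  ((measurable_const.indicator measurableSet_Ico).sub
    (measurable_const.indicator measurableSet_Ioc))

lemma rfun_measurable : Measurable rfun :=
  measurable_const.indicator measurableSet_Icc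

lemma indicator_one_integrable {s : Set ℝ} (hs : MeasurableSet s) (hfin : volume s ≠ ⊤) :
    Integrable (s.indicator (1 : ℝ → ℝ)) (volume : Measure ℝ) := by
  rw [integrable_indicator_iff hs]
  exact (integrableOn_const_iff).mpr (Or.inr (lt_top_iff_ne_top.mpr hfin))

lemma qfun_integrable (α : ℕ) : Integrable (qfun α) (volume : Measure ℝ) := by
  apply Integrable.sub
  · exact indicator_one_integrable measurableSet_Ico (by simp [Real.volume_Ico])
  · exact indicator_one_integrable measurableSet_Ioc (by simp [Real.volume_Ioc])

lemma rfun_integrable : Integrable rfun (volume : Measure ℝ) :=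
  indicator_one_integrable measurableSet_Icc (by simp [Real.volume_Icc])

lemma qfun_sq (α : ℕ) (t : ℝ) : (qfun α t) ^ 2 =
    (Set.Ico ((α:ℝ)+1) ((α:ℝ)+2)).indicator 1 t +
    (Set.Ioc (-((α:ℝ)+2)) (-((α:ℝ)+1))).indicator 1 t := by
  have hα : (0:ℝ) ≤ (α:ℝ) := Nat.cast_nonneg α
  simp only [qfun, Set.indicator_apply, Pi.one_apply, Set.mem_Ico, Set.mem_Ioc]
  split_ifs with h1 h2 h2
  · exfalso; linarith [h1.1, h2.2]
  all_goals ring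

lemma rfun_sq (t : ℝ) : (rfun t) ^ 2 = rfun t := by
  simp only [rfun, Set.indicator_apply, Pi.one_apply]
  split_ifs <;> norm_num

lemma qfun_sq_integrable (α : ℕ) : Integrable (fun t => (qfun α t) ^ 2) (volume : Measure ℝ) := by
  simp_rw [qfun_sq]
  apply Integrable.add
  · exact indicator_one_integrable measurableSet_Ico (by simp [Real.volume_Ico])
  · exact indicator_one_integrable measurableSet_Ioc (by simp [Real.volume_Ioc])

lemma rfun_sq_integrable : Integrable (fun t => (rfun t) ^ 2) (volume : Measure ℝ) := by
  simp_rw [rfun_sq]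
  exact rfun_integrable

lemma qfun_sq_integral (α : ℕ) : ∫ t, (qfun α t) ^ 2 = 2 := by
  simp_rw [qfun_sq]
  rw [integral_add
    (indicator_one_integrable measurableSet_Ico (by simp [Real.volume_Ico]))
    (indicator_one_integrable measurableSet_Ioc (by simp [Real.volume_Ioc]))]
  rw [integral_indicator_one measurableSet_Ico, integral_indicator_one measurableSet_Ioc]
  rw [Real.volume_real_Ico, Real.volume_real_Ioc]
  rw [show ((α:ℝ)+2) - ((α:ℝ)+1) = 1 by ring, show (-((α:ℝ)+1)) - (-((α:ℝ)+2)) = 1 by ring]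
  norm_num

lemma rfun_sq_integral : ∫ t, (rfun t) ^ 2 = 2 := by
  simp_rw [rfun_sq]
  rw [rfun, integral_indicator_one measurableSet_Icc, Real.volume_real_Icc]
  norm_num

lemma psif_measurable (n : ℕ) (i0 : Fin n) (α : ℕ) (i : Fin n) :
    Measurable (psif n i0 α i) := by
  unfold psif
  split_ifs
  · exact qfun_measurable α
  · exact rfun_measurable

lemma psif_sq_integrable (n : ℕ) (i0 : Fin n) (α : ℕ) (i : Fin n) :
    Integrable (fun t => (psif n i0 α i t) ^ 2) (volume : Measure ℝ) := by
  unfold psif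
  split_ifs
  · exact qfun_sq_integrable α
  · exact rfun_sq_integrable

lemma psif_sq_integral (n : ℕ) (i0 : Fin n) (α : ℕ) (i : Fin n) :
    ∫ t, (psif n i0 α i t) ^ 2 = 2 := by
  unfold psif
  split_ifs
  · exact qfun_sq_integral α
  · exact rfun_sq_integral

lemma hfun_measurable (n : ℕ) (i0 : Fin n) (α : ℕ) : Measurable (hfun n i0 α) := by
  unfold hfun
  apply Measurable.const_mul
  apply Finset.measurable_prod
  intro i _
  exact (psif_measurable n i0 α i).comp (measurable_pi_apply i)

lemma hfun_sq_integrable (n : ℕ) (i0 : Fin n) (α : ℕ) :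
    Integrable (fun u => (hfun n i0 α u) ^ 2) (volume : Measure (Cfg n)) := by
  have hpt : ∀ u : Cfg n, (hfun n i0 α u) ^ 2 =
      (((Real.sqrt 2)⁻¹) ^ n) ^ 2 * ∏ i, (fun t => (psif n i0 α i t) ^ 2) (u i) := by
    intro u
    unfold hfun
    rw [mul_pow, ← Finset.prod_pow]
  simp_rw [hpt]
  exact (Integrable.fintype_prod (𝕜 := ℝ) fun i => psif_sq_integrable n i0 α i).const_mul _

lemma hfun_sq_integral (n : ℕ) (i0 : Fin n) (α : ℕ) :
    ∫ u, (hfun n i0 α u) ^ 2 = 1 := by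
  have hpt : ∀ u : Cfg n, (hfun n i0 α u) ^ 2 =
      (((Real.sqrt 2)⁻¹) ^ n) ^ 2 * ∏ i, (fun t => (psif n i0 α i t) ^ 2) (u i) := by
    intro u
    unfold hfun
    rw [mul_pow, ← Finset.prod_pow]
  simp_rw [hpt]
  rw [integral_const_mul, MeasureTheory.integral_fintype_prod_volume_eq_prod (ι := Fin n)
    (fun i (t : ℝ) => (psif n i0 α i t) ^ 2)]
  have : ∀ i ∈ Finset.univ, ∫ t, (psif n i0 α i t) ^ 2 = 2 := fun i _ => psif_sq_integral n i0 α i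
  rw [Finset.prod_congr rfl this, Finset.prod_const, Finset.card_univ, Fintype.card_fin]
  rw [← pow_mul, mul_comm n 2, pow_mul, ← mul_pow]
  have h2 : ((Real.sqrt 2)⁻¹) ^ 2 * 2 = 1 := by
    rw [inv_pow, Real.sq_sqrt (by norm_num : (0:ℝ) ≤ 2)]
    norm_num
  rw [h2, one_pow]

lemma hfun_mul_eq_zero (n : ℕ) (i0 : Fin n) {α β : ℕ} (hαβ : α ≠ β) (u : Cfg n) :
    hfun n i0 α u * hfun n i0 β u = 0 := by
  unfold hfun
  rw [mul_mul_mul_comm, ← Finset.prod_mul_distrib]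
  apply mul_eq_zero_of_right
  apply Finset.prod_eq_zero (Finset.mem_univ i0)
  simp only [psif, if_pos rfl]
  exact qfun_mul_eq_zero hαβ (u i0)

lemma hfun_neg (n : ℕ) (i0 : Fin n) (α : ℕ) (u : Cfg n) :
    hfun n i0 α (-u) = - hfun n i0 α u := by
  unfold hfun
  have hpt : ∀ i, psif n i0 α i ((-u) i) =
      (if i = i0 then (-1:ℝ) else 1) * psif n i0 α i (u i) := by
    intro i
    by_cases h : i = i0
    · subst h
      have e1 : psif n i α i = qfun α := if_pos rfl
      have e2 : (if i = i then (-1:ℝ) else 1) = -1 := if_pos rfl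
      rw [e1, e2, Pi.neg_apply, qfun_neg]
      ring
    · have e1 : psif n i0 α i = rfun := if_neg h
      have e2 : (if i = i0 then (-1:ℝ) else 1) = 1 := if_neg h
      rw [e1, e2, Pi.neg_apply, rfun_neg, one_mul]
  rw [Finset.prod_congr rfl (fun i _ => hpt i), Finset.prod_mul_distrib,
    Fintype.prod_ite_eq' i0 (fun _ => (-1:ℝ))]
  ring

lemma genv_neg (n : ℕ) (u : Cfg n) : genv n (-u) = genv n u := by
  unfold genv
  rw [show ∑ i, ((-u) i) ^ 2 = ∑ i, (u i) ^ 2 from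
    Finset.sum_congr rfl fun i _ => by simp]

lemma genv_mul_hfun_integral (n : ℕ) (i0 : Fin n) (α : ℕ) :
    ∫ u, genv n u * hfun n i0 α u = 0 := by
  have h1 := integral_neg_eq_self (fun u : Cfg n => genv n u * hfun n i0 α u)
    (volume : Measure (Cfg n))
  have h2 : (fun u : Cfg n => genv n (-u) * hfun n i0 α (-u)) =
      fun u : Cfg n => -(genv n u * hfun n i0 α u) := by
    funext u
    rw [genv_neg, hfun_neg]
    ring
  rw [h2, integral_neg] at h1
  linarith

lemma hfun_mul_hfun_integral (n : ℕ) (i0 : Fin n) (α β : ℕ) :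
    ∫ u, hfun n i0 α u * hfun n i0 β u = if α = β then 1 else 0 := by
  by_cases h : α = β
  · subst h
    rw [if_pos rfl]
    have : ∀ u : Cfg n, hfun n i0 α u * hfun n i0 α u = (hfun n i0 α u) ^ 2 :=
      fun u => (sq (hfun n i0 α u)).symm
    simp_rw [this]
    exact hfun_sq_integral n i0 α
  · rw [if_neg h]
    simp_rw [hfun_mul_eq_zero n i0 h]
    exact integral_zero _ _

end ONFamily

section WMmember

/-- The probability weights concentrated at `0`. -/
def pdelta : ℕ → ℝ := fun α => if α = 0 then 1 else 0

/-- The orthonormal family: coherent Gaussian followed by odd bumps. -/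
def onfam (n : ℕ) (i0 : Fin n) (z₀ : Phase n) : ℕ → Cfg n → ℂ := fun α =>
  mstate n z₀ (if α = 0 then genv n else hfun n i0 (α - 1))

lemma onfam_isON (n : ℕ) (i0 : Fin n) (z₀ : Phase n) : IsONFamily n (onfam n i0 z₀) := by
  constructor
  · intro α
    unfold onfam
    by_cases h : α = 0
    · rw [if_pos h]
      exact memLp_mstate n z₀ _ (genv_measurable n) (genv_sq_integrable n)
    · rw [if_neg h]
      exact memLp_mstate n z₀ _ (hfun_measurable n i0 (α - 1)) (hfun_sq_integrable n i0 (α - 1))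
  · intro α β
    unfold onfam
    rw [integral_mstate_mul_conj]
    by_cases hα : α = 0 <;> by_cases hβ : β = 0
    · subst hα; subst hβ
      have e : (if (0:ℕ) = 0 then genv n else hfun n i0 (0-1)) = genv n := if_pos rfl
      rw [e, if_pos rfl]
      have : ∀ u : Cfg n, genv n u * genv n u = (genv n u) ^ 2 := fun u => (sq _).symm
      simp_rw [this]
      rw [genv_sq_integral]
      norm_num
    · subst hα
      have e : (if (0:ℕ) = 0 then genv n else hfun n i0 (0-1)) = genv n := if_pos rfl
      rw [e, if_neg hβ, if_neg (Ne.symm hβ)]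
      rw [genv_mul_hfun_integral]
      norm_num
    · subst hβ
      have e : (if (0:ℕ) = 0 then genv n else hfun n i0 (0-1)) = genv n := if_pos rfl
      rw [if_neg hα, e, if_neg hα]
      have : ∀ u : Cfg n, hfun n i0 (α-1) u * genv n u = genv n u * hfun n i0 (α-1) u :=
        fun u => mul_comm _ _
      simp_rw [this]
      rw [genv_mul_hfun_integral]
      norm_num
    · rw [if_neg hα, if_neg hβ, hfun_mul_hfun_integral]
      by_cases h : α = β
      · subst h
        rw [if_pos rfl, if_pos rfl]
        norm_num
      · rw [if_neg h, if_neg (fun hc => h (by omega : α = β))]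
        norm_num

lemma sum_pdelta_wigner (n : ℕ) (i0 : Fin n) (z₀ : Phase n) {N : ℕ} (hN : 1 ≤ N) (w : Phase n) :
    ∑ α ∈ Finset.range N, ((pdelta α : ℝ) : ℂ) *
      wigner n (onfam n i0 z₀ α) (onfam n i0 z₀ α) w =
    wigner n (mstate n z₀ (genv n)) (mstate n z₀ (genv n)) w := by
  rw [Finset.sum_eq_single_of_mem 0 (Finset.mem_range.mpr hN)]
  · simp [pdelta, onfam]
  · intro b _ hb
    simp [pdelta, hb]

lemma cstate_mem_WM (n : ℕ) (i0 : Fin n) (z₀ : Phase n) :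
    wigner n (mstate n z₀ (genv n)) (mstate n z₀ (genv n)) ∈ WM n := by
  refine ⟨pdelta, onfam n i0 z₀, onfam_isON n i0 z₀, ?_, ?_, ?_, ?_⟩
  · intro α
    unfold pdelta
    split_ifs <;> norm_num
  · exact hasSum_ite_eq 0 1
  · intro u hu
    filter_upwards [Filter.eventually_ge_atTop 1] with N hN
    intro x
    rw [sum_pdelta_wigner n i0 z₀ hN x]
    exact refl_mem_uniformity hu
  · apply Filter.Tendsto.congr' ?_ (tendsto_const_nhds (x := (0:ENNReal)))
    filter_upwards [Filter.eventually_ge_atTop 1] with N hN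
    have hz : (fun w : Phase n => wigner n (mstate n z₀ (genv n)) (mstate n z₀ (genv n)) w -
        ∑ α ∈ Finset.range N, ((pdelta α : ℝ) : ℂ) *
          wigner n (onfam n i0 z₀ α) (onfam n i0 z₀ α) w) = fun _ => 0 := by
      funext w
      rw [sum_pdelta_wigner n i0 z₀ hN w, sub_self]
    rw [hz]
    exact (eLpNorm_zero (p := 2) (μ := (volume : Measure (Phase n)))).symm

end WMmember

/-- Lemma on the Jacobian. -/
theorem stmt4 (n : ℕ) (A : Set (Phase n → ℂ)) (hA : A = WplusTwo n ∨ A = WM n)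
    (φ ψ : Phase n → Phase n)
    (hφ : ContDiff ℝ 1 φ) (hψ : ContDiff ℝ 1 ψ)
    (hl : Function.LeftInverse ψ φ) (hr : Function.RightInverse ψ φ)
    (hU : ∀ F ∈ A, Uφ n φ F ∈ A) :
    ∀ z, jac n φ z ≤ 1 := by
  intro z
  rcases Nat.eq_zero_or_pos n with hn | hn
  · subst hn
    haveI : IsEmpty (Fin 0 ⊕ Fin 0) := by infer_instance
    haveI : Subsingleton (Phase 0) := by infer_instance
    have hdet : (fderiv ℝ φ z).det = 1 := LinearMap.det_eq_one_of_subsingleton _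
    rw [jac, hdet]
    norm_num
  · set z₀ : Phase n := φ z with hz₀
    set f0 : Cfg n → ℂ := mstate n z₀ (genv n) with hf0
    have hf0m : MemLp f0 2 (volume : Measure (Cfg n)) :=
      memLp_mstate n z₀ _ (genv_measurable n) (genv_sq_integrable n)
    have hf0sq : ∫ x, ‖f0 x‖ ^ 2 = 1 := by
      rw [hf0, integral_sq_norm_mstate]
      exact genv_sq_integral n
    have hf0n : eLpNorm f0 2 (volume : Measure (Cfg n)) = 1 :=
      eLpNorm_eq_one_of_integral_sq n f0 hf0m hf0sq
    have hval : wigner n f0 f0 z₀ = (2:ℂ) ^ n := wigner_cstate n z₀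
    have hjnn : 0 ≤ jac n φ z := abs_nonneg _
    have hbound : ‖Uφ n φ (wigner n f0 f0) z‖ ≤ 2 ^ n := by
      rcases hA with hA | hA
      · have hmem : wigner n f0 f0 ∈ A := by
          rw [hA]
          exact ⟨f0, hf0m, hf0n, rfl⟩
        have hUm := hU _ hmem
        rw [hA] at hUm
        obtain ⟨h, hhm, hhn, hEq⟩ := hUm
        rw [hEq]
        exact wigner_norm_le n h h hhm hhm
          (integral_sq_eq_one_of_eLpNorm n h hhm hhn)
          (integral_sq_eq_one_of_eLpNorm n h hhm hhn) z
      · have hmem : wigner n f0 f0 ∈ A := by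
          rw [hA, hf0]
          exact cstate_mem_WM n ⟨0, hn⟩ z₀
        have hUm := hU _ hmem
        rw [hA] at hUm
        obtain ⟨p, f, hON, hp0, hpsum, hTU, -⟩ := hUm
        have hterm : ∀ N, ‖∑ α ∈ Finset.range N,
            ((p α : ℝ) : ℂ) * wigner n (f α) (f α) z‖ ≤ 2 ^ n := by
          intro N
          have hsq : ∀ α, ∫ x, ‖f α x‖ ^ 2 = 1 := by
            intro α
            apply integral_sq_eq_one_of_inner n (f α)
            have := hON.2 α α
            simpa using this
          calc ‖∑ α ∈ Finset.range N, ((p α : ℝ) : ℂ) * wigner n (f α) (f α) z‖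
              ≤ ∑ α ∈ Finset.range N, ‖((p α : ℝ) : ℂ) * wigner n (f α) (f α) z‖ :=
                norm_sum_le _ _
            _ ≤ ∑ α ∈ Finset.range N, p α * 2 ^ n := by
                apply Finset.sum_le_sum
                intro α _
                rw [norm_mul, Complex.norm_real, Real.norm_eq_abs, _root_.abs_of_nonneg (hp0 α)]
                exact mul_le_mul_of_nonneg_left
                  (wigner_norm_le n (f α) (f α) (hON.1 α) (hON.1 α) (hsq α) (hsq α) z)
                  (hp0 α)
            _ = (∑ α ∈ Finset.range N, p α) * 2 ^ n := (Finset.sum_mul _ _ _).symm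
            _ ≤ 1 * 2 ^ n := by
                apply mul_le_mul_of_nonneg_right _ (by positivity)
                exact sum_le_hasSum (Finset.range N) (fun a _ => hp0 a) hpsum
            _ = 2 ^ n := one_mul _
        exact le_of_tendsto ((hTU.tendsto_at z).norm) (Filter.Eventually.of_forall hterm)
    have hUz : Uφ n φ (wigner n f0 f0) z = ((jac n φ z : ℝ) : ℂ) * (2:ℂ) ^ n := by
      rw [Uφ, ← hz₀, hval]
    rw [hUz, norm_mul, Complex.norm_real, Real.norm_eq_abs, _root_.abs_of_nonneg hjnn] at hbound
    have h2n : ‖(2:ℂ) ^ n‖ = 2 ^ n := by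
      rw [norm_pow]
      simp
    rw [h2n] at hbound
    have hpow : (0:ℝ) < 2 ^ n := by positivity
    have := (mul_le_mul_iff_of_pos_right hpow).mp (by simpa using hbound)
    simpa using this


end
end

section
/- Let φ : ℝ²ⁿ → ℝ²ⁿ be a C¹ diffeomorphism with Jacobian J(z) = |det Dφ(z)| satisfying 0 < J(z) ≤ 1 for all z ∈ ℝ²ⁿ. Suppose that for every Σ ∈ Sp⁺(n) there exist Λ_Σ ∈ Sp⁺(n) and z_Σ ∈ ℝ²ⁿ such that ln J(z) − 2π·φ(z)·Σ⁻¹φ(z) = −2π·(z − z_Σ)·Λ_Σ⁻¹(z − z_Σ) for all z ∈ ℝ²ⁿ. Then φ is affine: there exist an invertible real 2n×2n matrix M and a ∈ ℝ²ⁿ with φ(z) = Mz + a for all z. -/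
open MeasureTheory Complex Filter Matrix

noncomputable section

/-! ### Auxiliary material for Statement 17 -/

namespace St17

abbrev Big (n : ℕ) := Matrix (Fin n ⊕ Fin n) (Fin n ⊕ Fin n) ℝ
abbrev Small (n : ℕ) := Matrix (Fin n) (Fin n) ℝ

section Generic

variable {m : Type*} [Fintype m] [DecidableEq m]

lemma isHermitian_of_isSymm {A : Matrix m m ℝ} (h : A.IsSymm) : A.IsHermitian := by
  have h' : ∀ i j, A j i = A i j := fun i j => congrFun (congrFun h i) j
  exact Matrix.ext fun i j => by
    rw [Matrix.conjTranspose_apply, star_trivial]; exact h' i j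

lemma dotProduct_pos {A : Matrix m m ℝ} (hA : A.PosDef) {x : m → ℝ} (hx : x ≠ 0) :
    0 < x ⬝ᵥ A *ᵥ x := by simpa using hA.dotProduct_mulVec_pos hx

lemma std_transpose (i j : m) :
    (Matrix.single i j (1:ℝ))ᵀ = Matrix.single j i 1 := by
  ext a b
  simp only [Matrix.transpose_apply, Matrix.single, Matrix.of_apply]
  by_cases h1 : b = i <;> by_cases h2 : a = j <;> simp [h1, h2, and_comm]

lemma dot_std (i j : m) (x y : m → ℝ) :
    x ⬝ᵥ (Matrix.single i j (1:ℝ)) *ᵥ y = x i * y j := by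
  rw [Matrix.single_mulVec]
  simp [dotProduct, Function.update_apply, mul_ite, Finset.sum_ite_eq]

lemma posDef_smul {A : Matrix m m ℝ} (hA : A.PosDef) {c : ℝ} (hc : 0 < c) :
    (c • A).PosDef := by
  refine Matrix.PosDef.of_dotProduct_mulVec_pos ?_ ?_
  · show (c • A)ᴴ = c • A
    rw [Matrix.conjTranspose_smul, hA.1.eq, star_trivial]
  · intro x hx
    have h1 : 0 < x ⬝ᵥ A *ᵥ x := dotProduct_pos hA hx
    have : x ⬝ᵥ (c • A) *ᵥ x = c * (x ⬝ᵥ A *ᵥ x) := by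
      rw [Matrix.smul_mulVec, dotProduct_smul, smul_eq_mul]
    simpa [this] using mul_pos hc h1

lemma posDef_one_add (i j : m) :
    ((1 : Matrix m m ℝ) +
      (2⁻¹:ℝ) • (Matrix.single i j 1 + Matrix.single j i 1)).PosDef := by
  refine Matrix.PosDef.of_dotProduct_mulVec_pos ?_ ?_
  · apply isHermitian_of_isSymm
    show _ᵀ = _
    rw [Matrix.transpose_add, Matrix.transpose_one, Matrix.transpose_smul,
      Matrix.transpose_add, std_transpose, std_transpose, add_comm (Matrix.single j i 1)]
  · intro x hx
    have hxx : 0 < x ⬝ᵥ x := by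
      have := Matrix.dotProduct_star_self_pos_iff.mpr hx
      simpa using this
    have hform : x ⬝ᵥ ((1 : Matrix m m ℝ) +
        (2⁻¹:ℝ) • (Matrix.single i j 1 + Matrix.single j i 1)) *ᵥ x
        = x ⬝ᵥ x + 2⁻¹ * (x i * x j + x j * x i) := by
      rw [Matrix.add_mulVec, dotProduct_add, Matrix.smul_mulVec,
        dotProduct_smul, Matrix.add_mulVec, dotProduct_add,
        dot_std, dot_std, Matrix.one_mulVec, smul_eq_mul]
    rw [show star x = x from star_trivial x, hform]
    rcases eq_or_ne i j with rfl | hij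
    · nlinarith [sq_nonneg (x i)]
    · have hle : x i * x i + x j * x j ≤ x ⬝ᵥ x := by
        have h1 : ∑ u ∈ ({i, j} : Finset m), x u * x u ≤ ∑ u, x u * x u :=
          Finset.sum_le_sum_of_subset_of_nonneg (Finset.subset_univ _)
            (fun u _ _ => mul_self_nonneg _)
        rwa [Finset.sum_pair hij] at h1
      nlinarith [sq_nonneg (x i + x j)]

lemma isSymm_of_isHermitian {A : Matrix m m ℝ} (h : A.IsHermitian) : A.IsSymm :=
  Matrix.ext fun i j => by
    have := congrFun (congrFun h i) j
    simpa [Matrix.conjTranspose_apply] using this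

lemma posDef_fromBlocks {l : Type*} [Fintype l] [DecidableEq l]
    {A : Matrix m m ℝ} {B : Matrix l l ℝ} (hA : A.PosDef) (hB : B.PosDef) :
    (Matrix.fromBlocks A 0 0 B).PosDef := by
  refine Matrix.PosDef.of_dotProduct_mulVec_pos ?_ ?_
  · apply isHermitian_of_isSymm
    show _ᵀ = _
    rw [Matrix.fromBlocks_transpose, Matrix.transpose_zero, Matrix.transpose_zero,
      (isSymm_of_isHermitian hA.1).eq, (isSymm_of_isHermitian hB.1).eq]
  · intro x hx
    set x₁ : m → ℝ := x ∘ Sum.inl with hx1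
    set x₂ : l → ℝ := x ∘ Sum.inr with hx2
    have hxe : Sum.elim x₁ x₂ = x := Sum.elim_comp_inl_inr x
    have hform : x ⬝ᵥ (Matrix.fromBlocks A 0 0 B) *ᵥ x
        = x₁ ⬝ᵥ A *ᵥ x₁ + x₂ ⬝ᵥ B *ᵥ x₂ := by
      conv_lhs => rw [← hxe]
      rw [Matrix.fromBlocks_mulVec]
      simp only [Matrix.zero_mulVec, add_zero, zero_add, Sum.elim_comp_inl, Sum.elim_comp_inr]
      rw [sumElim_dotProduct_sumElim]
    have hnn1 : 0 ≤ x₁ ⬝ᵥ A *ᵥ x₁ := by simpa using hA.posSemidef.dotProduct_mulVec_nonneg x₁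
    have hnn2 : 0 ≤ x₂ ⬝ᵥ B *ᵥ x₂ := by simpa using hB.posSemidef.dotProduct_mulVec_nonneg x₂
    have hne : x₁ ≠ 0 ∨ x₂ ≠ 0 := by
      by_contra hcon
      push_neg at hcon
      apply hx
      funext u
      cases u with
      | inl i => exact congrFun hcon.1 i
      | inr i => exact congrFun hcon.2 i
    have hpos : 0 < x₁ ⬝ᵥ A *ᵥ x₁ + x₂ ⬝ᵥ B *ᵥ x₂ := by
      rcases hne with h1 | h2
      · exact add_pos_of_pos_of_nonneg (dotProduct_pos hA h1) hnn2
      · exact add_pos_of_nonneg_of_pos hnn1 (dotProduct_pos hB h2)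
    rw [show star x = x from star_trivial x, hform]
    exact hpos

lemma smul_inv {A : Matrix m m ℝ} (hA : IsUnit A.det) {c : ℝ} (hc : c ≠ 0) :
    (c • A)⁻¹ = c⁻¹ • A⁻¹ := by
  apply Matrix.inv_eq_right_inv
  rw [Matrix.smul_mul, Matrix.mul_smul, Matrix.mul_nonsing_inv _ hA, smul_smul,
    mul_inv_cancel₀ hc, one_smul]

end Generic

/-- Quadratic polynomials on phase space. -/
def IsQP (n : ℕ) (h : Phase n → ℝ) : Prop :=
  ∃ (Q : Big n) (b : Phase n) (c : ℝ), ∀ z, h z = z ⬝ᵥ Q *ᵥ z + b ⬝ᵥ z + c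

variable {n : ℕ}

lemma IsQP.congr {h h' : Phase n → ℝ} (H : IsQP n h) (e : ∀ z, h z = h' z) : IsQP n h' := by
  obtain ⟨Q, b, c, hq⟩ := H; exact ⟨Q, b, c, fun z => (e z) ▸ hq z⟩

lemma IsQP.smul {h : Phase n → ℝ} (H : IsQP n h) (c : ℝ) : IsQP n (fun z => c * h z) := by
  obtain ⟨Q, b, d, hq⟩ := H
  refine ⟨c • Q, c • b, c * d, fun z => ?_⟩
  simp only [hq, Matrix.smul_mulVec, dotProduct_smul, smul_dotProduct,
    smul_eq_mul]
  ring

lemma IsQP.add {h g : Phase n → ℝ} (H : IsQP n h) (G : IsQP n g) :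
    IsQP n (fun z => h z + g z) := by
  obtain ⟨Q, b, c, hq⟩ := H; obtain ⟨Q', b', c', hg⟩ := G
  refine ⟨Q + Q', b + b', c + c', fun z => ?_⟩
  simp only [hq, hg, Matrix.add_mulVec, dotProduct_add, add_dotProduct]
  ring

lemma IsQP.sub {h g : Phase n → ℝ} (H : IsQP n h) (G : IsQP n g) :
    IsQP n (fun z => h z - g z) := by
  have := H.add (G.smul (-1))
  exact this.congr (fun z => by ring)

/-- The shifted quadratic form appearing in the Gaussian hypothesis is a quadratic
polynomial. -/
lemma isQP_shift (c : ℝ) (N : Big n) (w : Phase n) :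
    IsQP n (fun z => c * ((z - w) ⬝ᵥ N *ᵥ (z - w))) := by
  refine ⟨c • N, (-c) • (N *ᵥ w + Nᵀ *ᵥ w), c * (w ⬝ᵥ N *ᵥ w), fun z => ?_⟩
  have hwz : w ⬝ᵥ N *ᵥ z = Nᵀ *ᵥ w ⬝ᵥ z := by
    rw [Matrix.dotProduct_mulVec]
    rw [← Matrix.vecMul_transpose (A := Nᵀ) w, Matrix.transpose_transpose]
  have hzw : z ⬝ᵥ N *ᵥ w = N *ᵥ w ⬝ᵥ z := dotProduct_comm _ _
  simp only [Matrix.mulVec_sub, dotProduct_sub, sub_dotProduct,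
    Matrix.smul_mulVec, dotProduct_smul,
    smul_dotProduct, add_dotProduct, hwz, hzw, smul_eq_mul]
  ring

/-- The set of matrices whose quadratic form composed with φ is a quadratic polynomial. -/
def Wgood (n : ℕ) (φ : Phase n → Phase n) (C : Big n) : Prop :=
  IsQP n (fun z => φ z ⬝ᵥ C *ᵥ φ z)

lemma Wgood.add {φ : Phase n → Phase n} {C D : Big n} (hC : Wgood n φ C) (hD : Wgood n φ D) :
    Wgood n φ (C + D) :=
  (IsQP.add hC hD).congr fun z => by
    rw [Matrix.add_mulVec, dotProduct_add]

lemma Wgood.smul {φ : Phase n → Phase n} {C : Big n} (hC : Wgood n φ C) (c : ℝ) :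
    Wgood n φ (c • C) :=
  (IsQP.smul hC c).congr fun z => by
    rw [Matrix.smul_mulVec, dotProduct_smul, smul_eq_mul]

lemma Wgood.sub {φ : Phase n → Phase n} {C D : Big n} (hC : Wgood n φ C) (hD : Wgood n φ D) :
    Wgood n φ (C - D) := by
  have := hC.add (hD.smul (-1))
  have h : C + (-1 : ℝ) • D = C - D := by rw [neg_one_smul]; exact (sub_eq_add_neg C D).symm
  rwa [h] at this

lemma Wgood.neg {φ : Phase n → Phase n} {C : Big n} (hC : Wgood n φ C) :
    Wgood n φ (-C) := by
  have := hC.smul (-1)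
  rwa [neg_one_smul] at this

section Symplectic

variable {n : ℕ}

lemma S_inv {A : Small n} (hA : IsUnit A.det) :
    (Matrix.fromBlocks A 0 0 A⁻¹)⁻¹ = Matrix.fromBlocks A⁻¹ 0 0 A := by
  apply Matrix.inv_eq_right_inv
  rw [Matrix.fromBlocks_multiply]
  simp [Matrix.mul_nonsing_inv _ hA, Matrix.nonsing_inv_mul _ hA,
    Matrix.fromBlocks_one]

lemma S_symp {A : Small n} (hAs : A.IsSymm) (hAp : A.PosDef) :
    (Matrix.fromBlocks A 0 0 A⁻¹)ᵀ * Jmat n * Matrix.fromBlocks A 0 0 A⁻¹ = Jmat n := by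
  have hdet : IsUnit A.det := isUnit_iff_ne_zero.mpr hAp.det_pos.ne'
  have hAi : A * A⁻¹ = 1 := Matrix.mul_nonsing_inv _ hdet
  have hiA : A⁻¹ * A = 1 := Matrix.nonsing_inv_mul _ hdet
  have hAT : Aᵀ = A := hAs
  have hAiT : (A⁻¹)ᵀ = A⁻¹ := by rw [Matrix.transpose_nonsing_inv, hAT]
  rw [Jmat, Matrix.fromBlocks_transpose, Matrix.fromBlocks_multiply, Matrix.fromBlocks_multiply]
  simp [hAT, hAiT, hAi, hiA, Matrix.mul_neg, Matrix.neg_mul]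

lemma S_mem {A : Small n} (hAs : A.IsSymm) (hAp : A.PosDef) :
    InSpPlus n (Matrix.fromBlocks A 0 0 A⁻¹) := by
  have hAT : Aᵀ = A := hAs
  have hAiT : (A⁻¹)ᵀ = A⁻¹ := by rw [Matrix.transpose_nonsing_inv, hAT]
  refine ⟨S_symp hAs hAp, ?_, ?_⟩
  · show _ᵀ = _
    rw [Matrix.fromBlocks_transpose, Matrix.transpose_zero, hAT, hAiT]
  · exact posDef_fromBlocks hAp hAp.inv

lemma T_mem {A L : Small n} (hAs : A.IsSymm) (hAp : A.PosDef) (hLs : L.IsSymm) :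
    InSpPlus n (Matrix.fromBlocks A (A*L) (L*A) (L*A*L + A⁻¹)) := by
  have hdet : IsUnit A.det := isUnit_iff_ne_zero.mpr hAp.det_pos.ne'
  have hAT : Aᵀ = A := hAs
  have hLT : Lᵀ = L := hLs
  have hAiT : (A⁻¹)ᵀ = A⁻¹ := by rw [Matrix.transpose_nonsing_inv, hAT]
  set S : Big n := Matrix.fromBlocks A 0 0 A⁻¹ with hS
  set U : Big n := Matrix.fromBlocks 1 L 0 1 with hU
  have hUt : Uᵀ = Matrix.fromBlocks 1 0 L 1 := by
    rw [hU, Matrix.fromBlocks_transpose, Matrix.transpose_one, Matrix.transpose_zero, hLT]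
  have hTe : Matrix.fromBlocks A (A*L) (L*A) (L*A*L + A⁻¹) = Uᵀ * S * U := by
    rw [hUt, hS, hU, Matrix.fromBlocks_multiply, Matrix.fromBlocks_multiply]
    simp [Matrix.mul_assoc]
  have hUJUt : U * Jmat n * Uᵀ = Jmat n := by
    rw [hUt, hU, Jmat, Matrix.fromBlocks_multiply, Matrix.fromBlocks_multiply]
    simp [Matrix.mul_neg, Matrix.neg_mul]
  have hUtJU : Uᵀ * Jmat n * U = Jmat n := by
    rw [hUt, hU, Jmat, Matrix.fromBlocks_multiply, Matrix.fromBlocks_multiply]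
    simp [Matrix.mul_neg, Matrix.neg_mul]
  have hSsymm : Sᵀ = S := by
    rw [hS, Matrix.fromBlocks_transpose, Matrix.transpose_zero, hAT, hAiT]
  have hsymp : (Uᵀ * S * U)ᵀ * Jmat n * (Uᵀ * S * U) = Jmat n := by
    calc (Uᵀ * S * U)ᵀ * Jmat n * (Uᵀ * S * U)
        = (Uᵀ * Sᵀ * U) * Jmat n * (Uᵀ * S * U) := by
          rw [Matrix.transpose_mul, Matrix.transpose_mul, Matrix.transpose_transpose]
          simp only [Matrix.mul_assoc]
      _ = Uᵀ * Sᵀ * (U * Jmat n * Uᵀ) * S * U := by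
          simp only [Matrix.mul_assoc]
      _ = Uᵀ * Sᵀ * Jmat n * S * U := by rw [hUJUt]
      _ = Uᵀ * (Sᵀ * Jmat n * S) * U := by simp only [Matrix.mul_assoc]
      _ = Uᵀ * Jmat n * U := by rw [S_symp hAs hAp]
      _ = Jmat n := hUtJU
  refine ⟨?_, ?_, ?_⟩
  · show _ᵀ * Jmat n * _ = Jmat n
    rw [hTe]; exact hsymp
  · show _ᵀ = _
    rw [hTe, Matrix.transpose_mul, Matrix.transpose_mul, Matrix.transpose_transpose,
      hSsymm, Matrix.mul_assoc]
  · rw [hTe]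
    set V : Big n := Matrix.fromBlocks 1 (-L) 0 1 with hV
    have hVU : V * U = 1 := by
      rw [hV, hU, Matrix.fromBlocks_multiply, ← Matrix.fromBlocks_one]
      congr 1 <;> simp
    have hSp : S.PosDef := posDef_fromBlocks hAp hAp.inv
    refine Matrix.PosDef.of_dotProduct_mulVec_pos ?_ ?_
    · apply isHermitian_of_isSymm
      show _ᵀ = _
      rw [Matrix.transpose_mul, Matrix.transpose_mul, Matrix.transpose_transpose,
        hSsymm, Matrix.mul_assoc]
    · intro x hx
      have hUx : U *ᵥ x ≠ 0 := by
        intro hc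
        apply hx
        have : (V * U) *ᵥ x = V *ᵥ (U *ᵥ x) := (Matrix.mulVec_mulVec x V U).symm
        rw [hVU, Matrix.one_mulVec, hc, Matrix.mulVec_zero] at this
        exact this
      have hform : x ⬝ᵥ (Uᵀ * S * U) *ᵥ x = (U *ᵥ x) ⬝ᵥ S *ᵥ (U *ᵥ x) := by
        rw [Matrix.mul_assoc, ← Matrix.mulVec_mulVec, Matrix.dotProduct_mulVec x Uᵀ,
          Matrix.vecMul_transpose, Matrix.mulVec_mulVec]
      rw [show star x = x from star_trivial x, hform]
      exact dotProduct_pos hSp hUx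

lemma T_inv {A L : Small n} (hA : IsUnit A.det) :
    (Matrix.fromBlocks A (A*L) (L*A) (L*A*L + A⁻¹))⁻¹ =
      Matrix.fromBlocks (A⁻¹ + L*A*L) (-(L*A)) (-(A*L)) A := by
  have hAi : A * A⁻¹ = 1 := Matrix.mul_nonsing_inv _ hA
  have hiA : A⁻¹ * A = 1 := Matrix.nonsing_inv_mul _ hA
  have hAi' : ∀ X : Small n, A * (A⁻¹ * X) = X := fun X => by
    rw [← Matrix.mul_assoc, hAi, Matrix.one_mul]
  have hiA' : ∀ X : Small n, A⁻¹ * (A * X) = X := fun X => by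
    rw [← Matrix.mul_assoc, hiA, Matrix.one_mul]
  apply Matrix.inv_eq_right_inv
  rw [Matrix.fromBlocks_multiply, ← Matrix.fromBlocks_one, Matrix.fromBlocks_inj]
  refine ⟨?_, ?_, ?_, ?_⟩
  · simp only [Matrix.mul_add, Matrix.mul_neg, Matrix.mul_assoc, hAi, hAi', hiA', Matrix.mul_one]
    abel
  · simp only [Matrix.mul_add, Matrix.mul_neg, Matrix.mul_assoc, hAi, hAi', hiA', Matrix.mul_one]
    abel
  · simp only [Matrix.add_mul, Matrix.mul_add, Matrix.mul_neg, Matrix.mul_assoc,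
      hAi, hiA, hAi', hiA', Matrix.mul_one, Matrix.one_mul]
    abel
  · simp only [Matrix.add_mul, Matrix.mul_add, Matrix.mul_neg, Matrix.mul_assoc,
      hAi, hiA, hAi', hiA', Matrix.mul_one, Matrix.one_mul]
    abel

end Symplectic

lemma wtrans {φ : Phase n → Phase n} {C D : Big n} (h : Wgood n φ C) (he : C = D) :
    Wgood n φ D := he ▸ h

lemma quad_expand (Q : Big n) (bb z w : Phase n) (c t : ℝ) :
    (z + t • w) ⬝ᵥ Q *ᵥ (z + t • w) + bb ⬝ᵥ (z + t • w) + c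
      = (z ⬝ᵥ Q *ᵥ z + bb ⬝ᵥ z + c)
        + t * (z ⬝ᵥ Q *ᵥ w + w ⬝ᵥ Q *ᵥ z + bb ⬝ᵥ w) + t^2 * (w ⬝ᵥ Q *ᵥ w) := by
  simp only [Matrix.mulVec_add, dotProduct_add, add_dotProduct,
    Matrix.mulVec_smul, dotProduct_smul, smul_dotProduct, smul_eq_mul]
  ring

lemma bigE_inl_inl (i j : Fin n) : Matrix.single (Sum.inl i : Fin n ⊕ Fin n)
    (Sum.inl j : Fin n ⊕ Fin n) (1:ℝ) = Matrix.fromBlocks (Matrix.single i j 1) 0 0 0 := by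
  ext a b
  cases a <;> cases b <;>
    simp [Matrix.single, Matrix.fromBlocks]

lemma bigE_inl_inr (i j : Fin n) : Matrix.single (Sum.inl i : Fin n ⊕ Fin n)
    (Sum.inr j : Fin n ⊕ Fin n) (1:ℝ) = Matrix.fromBlocks 0 (Matrix.single i j 1) 0 0 := by
  ext a b
  cases a <;> cases b <;>
    simp [Matrix.single, Matrix.fromBlocks]

lemma bigE_inr_inl (i j : Fin n) : Matrix.single (Sum.inr i : Fin n ⊕ Fin n)
    (Sum.inl j : Fin n ⊕ Fin n) (1:ℝ) = Matrix.fromBlocks 0 0 (Matrix.single i j 1) 0 := by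
  ext a b
  cases a <;> cases b <;>
    simp [Matrix.single, Matrix.fromBlocks]

lemma bigE_inr_inr (i j : Fin n) : Matrix.single (Sum.inr i : Fin n ⊕ Fin n)
    (Sum.inr j : Fin n ⊕ Fin n) (1:ℝ) = Matrix.fromBlocks 0 0 0 (Matrix.single i j 1) := by
  ext a b
  cases a <;> cases b <;>
    simp [Matrix.single, Matrix.fromBlocks]

end St17

/-- the Gaussian identity forces φ to be affine. -/
theorem stmt17 (n : ℕ) (φ ψ : Phase n → Phase n)
    (hφ : ContDiff ℝ 1 φ) (hψ : ContDiff ℝ 1 ψ)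
    (hl : Function.LeftInverse ψ φ) (hr : Function.RightInverse ψ φ)
    (hJ : ∀ z, 0 < jac n φ z ∧ jac n φ z ≤ 1)
    (hgauss : ∀ Sig : Matrix (Fin n ⊕ Fin n) (Fin n ⊕ Fin n) ℝ, InSpPlus n Sig →
      ∃ (Lam : Matrix (Fin n ⊕ Fin n) (Fin n ⊕ Fin n) ℝ) (zS : Phase n),
        InSpPlus n Lam ∧ ∀ z,
          Real.log (jac n φ z) - 2 * Real.pi * (φ z ⬝ᵥ (Sig⁻¹.mulVec (φ z))) =
            -(2 * Real.pi) * ((z - zS) ⬝ᵥ (Lam⁻¹.mulVec (z - zS)))) :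
    ∃ (M : Matrix (Fin n ⊕ Fin n) (Fin n ⊕ Fin n) ℝ) (a : Phase n),
      IsUnit M ∧ ∀ z, φ z = M.mulVec z + a := by
  classical
  open St17 in
  -- Step 1: difference of Gaussian identities gives quadratic polynomials.
  have hπ : (2 * Real.pi) ≠ 0 := by positivity
  have Wkey : ∀ S₁ S₂ : Big n, InSpPlus n S₁ → InSpPlus n S₂ →
      Wgood n φ (S₁⁻¹ - S₂⁻¹) := by
    intro S₁ S₂ h₁ h₂
    obtain ⟨Λ₁, w₁, -, hq₁⟩ := hgauss S₁ h₁
    obtain ⟨Λ₂, w₂, -, hq₂⟩ := hgauss S₂ h₂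
    refine ((isQP_shift 1 Λ₁⁻¹ w₁).sub (isQP_shift 1 Λ₂⁻¹ w₂)).congr fun z => ?_
    have e1 := hq₁ z
    have e2 := hq₂ z
    have hsplit : φ z ⬝ᵥ (S₁⁻¹ - S₂⁻¹) *ᵥ φ z
        = φ z ⬝ᵥ S₁⁻¹ *ᵥ φ z - φ z ⬝ᵥ S₂⁻¹ *ᵥ φ z := by
      rw [Matrix.sub_mulVec, dotProduct_sub]
    rw [hsplit]
    apply mul_left_cancel₀ hπ
    linear_combination e1 - e2
  -- Step 2: matrices supported in one diagonal block.
  have Wdiag : ∀ A : Small n, A.IsSymm → A.PosDef →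
      Wgood n φ (Matrix.fromBlocks A⁻¹ 0 0 0) ∧ Wgood n φ (Matrix.fromBlocks 0 0 0 A) := by
    intro A hAs hAp
    have hdet : IsUnit A.det := isUnit_iff_ne_zero.mpr hAp.det_pos.ne'
    have h2s : ((2:ℝ) • A).IsSymm := by
      show _ᵀ = _; rw [Matrix.transpose_smul, hAs.eq]
    have h2p : ((2:ℝ) • A).PosDef := posDef_smul hAp two_pos
    have hhs : ((2⁻¹:ℝ) • A).IsSymm := by
      show _ᵀ = _; rw [Matrix.transpose_smul, hAs.eq]
    have hhp : ((2⁻¹:ℝ) • A).PosDef := posDef_smul hAp (by norm_num)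
    have hinv2 : ((2:ℝ) • A)⁻¹ = (2⁻¹:ℝ) • A⁻¹ := smul_inv hdet two_ne_zero
    have hinvh : ((2⁻¹:ℝ) • A)⁻¹ = (2:ℝ) • A⁻¹ := by
      rw [smul_inv hdet (by norm_num : (2⁻¹:ℝ) ≠ 0)]; norm_num
    have w1 : Wgood n φ (Matrix.fromBlocks A⁻¹ 0 0 A
        - Matrix.fromBlocks ((2⁻¹:ℝ) • A⁻¹) 0 0 ((2:ℝ) • A)) := by
      have h := Wkey _ _ (S_mem hAs hAp) (S_mem h2s h2p)
      rwa [S_inv hdet, S_inv (isUnit_iff_ne_zero.mpr h2p.det_pos.ne'), hinv2] at h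
    have w2 : Wgood n φ (Matrix.fromBlocks A⁻¹ 0 0 A
        - Matrix.fromBlocks ((2:ℝ) • A⁻¹) 0 0 ((2⁻¹:ℝ) • A)) := by
      have h := Wkey _ _ (S_mem hAs hAp) (S_mem hhs hhp)
      rwa [S_inv hdet, S_inv (isUnit_iff_ne_zero.mpr hhp.det_pos.ne'), hinvh] at h
    constructor
    · have h3 := (w1.add (w2.smul 2)).smul (-(2/3 : ℝ))
      refine wtrans h3 ?_
      simp only [sub_eq_add_neg, Matrix.fromBlocks_neg, Matrix.fromBlocks_add,
        Matrix.fromBlocks_smul]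
      rw [Matrix.fromBlocks_inj]
      refine ⟨?_, ?_, ?_, ?_⟩ <;> module
    · have h3 := (w2.add (w1.smul 2)).smul (-(2/3 : ℝ))
      refine wtrans h3 ?_
      simp only [sub_eq_add_neg, Matrix.fromBlocks_neg, Matrix.fromBlocks_add,
        Matrix.fromBlocks_smul]
      rw [Matrix.fromBlocks_inj]
      refine ⟨?_, ?_, ?_, ?_⟩ <;> module
  have WC00 : ∀ B : Small n, B.IsSymm → B.PosDef → Wgood n φ (Matrix.fromBlocks B 0 0 0) := by
    intro B hBs hBp
    have hdet : IsUnit B.det := isUnit_iff_ne_zero.mpr hBp.det_pos.ne'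
    have hBis : (B⁻¹).IsSymm := by
      show _ᵀ = _; rw [Matrix.transpose_nonsing_inv, hBs.eq]
    have h := (Wdiag B⁻¹ hBis hBp.inv).1
    rwa [Matrix.nonsing_inv_nonsing_inv _ hdet] at h
  have W00C : ∀ B : Small n, B.IsSymm → B.PosDef → Wgood n φ (Matrix.fromBlocks 0 0 0 B) :=
    fun B hBs hBp => (Wdiag B hBs hBp).2
  -- single symmetrized entries in the diagonal blocks
  have honeadd_symm : ∀ i j : Fin n, ((1 : Small n)
      + (2⁻¹:ℝ) • (Matrix.single i j 1 + Matrix.single j i 1)).IsSymm := by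
    intro i j
    show _ᵀ = _
    rw [Matrix.transpose_add, Matrix.transpose_one, Matrix.transpose_smul,
      Matrix.transpose_add, std_transpose, std_transpose,
      add_comm (Matrix.single j i 1)]
  have Wsym1 : ∀ i j : Fin n, Wgood n φ (Matrix.fromBlocks
      (Matrix.single i j 1 + Matrix.single j i 1) 0 0 0) := by
    intro i j
    have h1 := WC00 _ (honeadd_symm i j) (posDef_one_add i j)
    have h2 := WC00 1 (Matrix.isSymm_one : (1 : Small n).IsSymm) (Matrix.PosDef.one : (1 : Small n).PosDef)
    have h3 := (h1.sub h2).smul 2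
    refine wtrans h3 ?_
    simp only [sub_eq_add_neg, Matrix.fromBlocks_neg, Matrix.fromBlocks_add,
      Matrix.fromBlocks_smul]
    rw [Matrix.fromBlocks_inj]
    refine ⟨?_, ?_, ?_, ?_⟩ <;> module
  have Wsym2 : ∀ i j : Fin n, Wgood n φ (Matrix.fromBlocks 0 0 0
      (Matrix.single i j 1 + Matrix.single j i 1)) := by
    intro i j
    have h1 := W00C _ (honeadd_symm i j) (posDef_one_add i j)
    have h2 := W00C 1 (Matrix.isSymm_one : (1 : Small n).IsSymm) (Matrix.PosDef.one : (1 : Small n).PosDef)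
    have h3 := (h1.sub h2).smul 2
    refine wtrans h3 ?_
    simp only [sub_eq_add_neg, Matrix.fromBlocks_neg, Matrix.fromBlocks_add,
      Matrix.fromBlocks_smul]
    rw [Matrix.fromBlocks_inj]
    refine ⟨?_, ?_, ?_, ?_⟩ <;> module
  -- cross (off-diagonal block) entries
  have Wcross0 : ∀ A L : Small n, A.IsSymm → A.PosDef → L.IsSymm →
      Wgood n φ (Matrix.fromBlocks (L*A*L) (-(L*A)) (-(A*L)) 0) := by
    intro A L hAs hAp hLs
    have hdet : IsUnit A.det := isUnit_iff_ne_zero.mpr hAp.det_pos.ne'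
    have h := Wkey _ _ (T_mem hAs hAp hLs) (S_mem hAs hAp)
    rw [T_inv hdet, S_inv hdet] at h
    refine wtrans h ?_
    simp only [sub_eq_add_neg, Matrix.fromBlocks_neg, Matrix.fromBlocks_add]
    rw [Matrix.fromBlocks_inj]
    refine ⟨?_, ?_, ?_, ?_⟩ <;> abel
  have Weii : ∀ i : Fin n, Wgood n φ (Matrix.fromBlocks (Matrix.single i i 1) 0 0 0) := by
    intro i
    have h := (Wsym1 i i).smul (2⁻¹)
    refine wtrans h ?_
    simp only [Matrix.fromBlocks_smul]
    rw [Matrix.fromBlocks_inj]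
    refine ⟨?_, ?_, ?_, ?_⟩ <;> module
  have Wcross : ∀ i j : Fin n, Wgood n φ (Matrix.fromBlocks 0
      (Matrix.single i j 1) (Matrix.single j i 1) 0) := by
    intro i j
    have hone : (1 : Small n).IsSymm := Matrix.isSymm_one
    have honep : (1 : Small n).PosDef := Matrix.PosDef.one
    rcases eq_or_ne i j with rfl | hij
    · -- diagonal cross case
      have hLs : (Matrix.single i i (1:ℝ)).IsSymm := by
        show _ᵀ = _; exact std_transpose i i
      have u := Wcross0 1 (Matrix.single i i 1) hone honep hLs
      have u' : Wgood n φ (Matrix.fromBlocks (Matrix.single i i 1)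
          (-(Matrix.single i i 1)) (-(Matrix.single i i 1)) 0) := by
        refine wtrans u ?_
        rw [Matrix.mul_one, Matrix.one_mul, Matrix.single_mul_single_same, mul_one]
      have h := (Weii i).sub u'
      refine wtrans h ?_
      simp only [sub_eq_add_neg, Matrix.fromBlocks_neg, Matrix.fromBlocks_add, neg_neg]
      rw [Matrix.fromBlocks_inj]
      refine ⟨?_, ?_, ?_, ?_⟩ <;> abel
    · -- off-diagonal cross case
      set L : Small n := Matrix.single i j 1 + Matrix.single j i 1 with hL
      have hLs : L.IsSymm := by
        show _ᵀ = _
        rw [hL, Matrix.transpose_add, std_transpose, std_transpose,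
          add_comm (Matrix.single j i 1)]
      have hLL : L * L = Matrix.single i i 1 + Matrix.single j j 1 := by
        rw [hL, Matrix.add_mul, Matrix.mul_add, Matrix.mul_add,
          Matrix.single_mul_single_of_ne (h := hij.symm),
          Matrix.single_mul_single_same, Matrix.single_mul_single_same,
          Matrix.single_mul_single_of_ne (h := hij)]
        simp [mul_one]
        try abel
      -- first element : A = 1
      have u₁ := Wcross0 1 L hone honep hLs
      have u₁' : Wgood n φ (Matrix.fromBlocks
          (Matrix.single i i 1 + Matrix.single j j 1) (-L) (-L) 0) := by
        refine wtrans u₁ ?_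
        rw [Matrix.mul_one, Matrix.one_mul, hLL]
      have c₁ : Wgood n φ (Matrix.fromBlocks
          (Matrix.single i i 1 + Matrix.single j j 1) 0 0 0) := by
        have h := (Weii i).add (Weii j)
        refine wtrans h ?_
        simp only [Matrix.fromBlocks_add]
        rw [Matrix.fromBlocks_inj]
        refine ⟨?_, ?_, ?_, ?_⟩ <;> abel
      have k₁ : Wgood n φ (Matrix.fromBlocks 0 L L 0) := by
        have h := c₁.sub u₁'
        refine wtrans h ?_
        simp only [sub_eq_add_neg, Matrix.fromBlocks_neg, Matrix.fromBlocks_add, neg_neg]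
        rw [Matrix.fromBlocks_inj]
        refine ⟨?_, ?_, ?_, ?_⟩ <;> abel
      -- second element : A = 1 + e j j
      set A₂ : Small n := 1 + Matrix.single j j 1 with hA₂
      have hA₂s : A₂.IsSymm := by
        show _ᵀ = _
        rw [hA₂, Matrix.transpose_add, Matrix.transpose_one, std_transpose]
      have hA₂p : A₂.PosDef := by
        have h := posDef_one_add j j
        have he : (1 : Small n) + (2⁻¹:ℝ) • (Matrix.single j j 1
            + Matrix.single j j 1) = A₂ := by
          rw [hA₂]
          congr 1
          module
        rwa [he] at h
      have hLA₂ : L * A₂ = L + Matrix.single i j 1 := by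
        rw [hA₂, hL, Matrix.mul_add, Matrix.mul_one, Matrix.add_mul,
          Matrix.single_mul_single_same,
          Matrix.single_mul_single_of_ne (h := hij)]
        simp [mul_one]
      have hA₂L : A₂ * L = L + Matrix.single j i 1 := by
        rw [hA₂, hL, Matrix.add_mul, Matrix.one_mul, Matrix.mul_add,
          Matrix.single_mul_single_same,
          Matrix.single_mul_single_of_ne (h := hij.symm)]
        simp [mul_one]
      have hLA₂L : L * A₂ * L = Matrix.single i i 1 + Matrix.single j j 1
          + Matrix.single i i 1 := by
        rw [hLA₂, Matrix.add_mul, hLL, hL, Matrix.mul_add,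
          Matrix.single_mul_single_same,
          Matrix.single_mul_single_of_ne (h := hij.symm)]
        simp [mul_one]
      have u₂ := Wcross0 A₂ L hA₂s hA₂p hLs
      have u₂' : Wgood n φ (Matrix.fromBlocks
          (Matrix.single i i 1 + Matrix.single j j 1
            + Matrix.single i i 1)
          (-(L + Matrix.single i j 1)) (-(L + Matrix.single j i 1)) 0) := by
        refine wtrans u₂ ?_
        rw [hLA₂L, hLA₂, hA₂L]
      have c₂ : Wgood n φ (Matrix.fromBlocks
          (Matrix.single i i 1 + Matrix.single j j 1
            + Matrix.single i i 1) 0 0 0) := by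
        have h := ((Weii i).add (Weii j)).add (Weii i)
        refine wtrans h ?_
        simp only [Matrix.fromBlocks_add]
        rw [Matrix.fromBlocks_inj]
        refine ⟨?_, ?_, ?_, ?_⟩ <;> abel
      have k₂ : Wgood n φ (Matrix.fromBlocks 0 (L + Matrix.single i j 1)
          (L + Matrix.single j i 1) 0) := by
        have h := c₂.sub u₂'
        refine wtrans h ?_
        simp only [sub_eq_add_neg, Matrix.fromBlocks_neg, Matrix.fromBlocks_add, neg_neg]
        rw [Matrix.fromBlocks_inj]
        refine ⟨?_, ?_, ?_, ?_⟩ <;> abel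
      have h := k₂.sub k₁
      refine wtrans h ?_
      simp only [sub_eq_add_neg, Matrix.fromBlocks_neg, Matrix.fromBlocks_add]
      rw [Matrix.fromBlocks_inj]
      refine ⟨?_, ?_, ?_, ?_⟩ <;> abel
  -- Step 3: all products of coordinates of φ are quadratic polynomials
  have Hab : ∀ a b : Fin n ⊕ Fin n, IsQP n (fun z => φ z a * φ z b) := by
    intro a b
    have hWC : Wgood n φ (Matrix.single a b 1 + Matrix.single b a 1) := by
      rcases a with i | i <;> rcases b with j | j
      · refine wtrans (Wsym1 i j) ?_
        rw [bigE_inl_inl, bigE_inl_inl, Matrix.fromBlocks_add]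
        simp
      · refine wtrans (Wcross i j) ?_
        rw [bigE_inl_inr, bigE_inr_inl, Matrix.fromBlocks_add]
        simp
      · refine wtrans (Wcross j i) ?_
        rw [bigE_inr_inl, bigE_inl_inr, Matrix.fromBlocks_add]
        simp
      · refine wtrans (Wsym2 i j) ?_
        rw [bigE_inr_inr, bigE_inr_inr, Matrix.fromBlocks_add]
        simp
    have h := (hWC.smul (2⁻¹ : ℝ))
    refine h.congr fun z => ?_
    rw [Matrix.smul_mulVec, dotProduct_smul, Matrix.add_mulVec,
      dotProduct_add, dot_std, dot_std, smul_eq_mul]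
    ring
  -- Step 4: homogeneity of the products around z* := ψ 0
  set zs : Phase n := ψ 0 with hzs
  have h0 : φ zs = 0 := hr 0
  have hcont : Continuous φ := hφ.continuous
  have hD : ∀ w : Phase n, HasDerivAt (fun t : ℝ => φ (zs + t • w)) (fderiv ℝ φ zs w) 0 := by
    intro w
    have hcurve : HasDerivAt (fun t : ℝ => zs + t • w) w 0 := by
      simpa using ((hasDerivAt_id (0:ℝ)).smul_const w).const_add zs
    have hdiff : DifferentiableAt ℝ φ zs := (hφ.differentiable one_ne_zero).differentiableAt
    have h00 : (fun t : ℝ => zs + t • w) 0 = zs := by simp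
    have hf : HasFDerivAt φ (fderiv ℝ φ zs) ((fun t : ℝ => zs + t • w) 0) := by
      rw [h00]; exact hdiff.hasFDerivAt
    exact hf.comp_hasDerivAt 0 hcurve
  have hkey : ∀ (a b : Fin n ⊕ Fin n) (w : Phase n) (t : ℝ),
      φ (zs + t • w) a * φ (zs + t • w) b = t^2 * (φ (zs + w) a * φ (zs + w) b) := by
    intro a b w t
    obtain ⟨Q, bb, c, hq⟩ := Hab a b
    have hq0 : zs ⬝ᵥ Q *ᵥ zs + bb ⬝ᵥ zs + c = 0 := by
      have h1 : φ zs a * φ zs b = zs ⬝ᵥ Q *ᵥ zs + bb ⬝ᵥ zs + c := hq zs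
      rw [h0] at h1
      simpa using h1.symm
    set α := zs ⬝ᵥ Q *ᵥ w + w ⬝ᵥ Q *ᵥ zs + bb ⬝ᵥ w with hα
    set β := w ⬝ᵥ Q *ᵥ w with hβ
    have hpoly : ∀ s : ℝ, φ (zs + s • w) a * φ (zs + s • w) b = s * α + s^2 * β := by
      intro s
      have h1 : φ (zs + s • w) a * φ (zs + s • w) b
          = (zs + s • w) ⬝ᵥ Q *ᵥ (zs + s • w) + bb ⬝ᵥ (zs + s • w) + c := hq (zs + s • w)
      rw [quad_expand, hq0] at h1
      simpa using h1
    have halpha : α = 0 := by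
      have hsl := hasDerivAt_iff_tendsto_slope.mp (hD w)
      have hfa : Tendsto (fun t : ℝ => slope (fun s : ℝ => φ (zs + s • w)) 0 t a)
          (nhdsWithin (0:ℝ) {(0:ℝ)}ᶜ) (nhds ((fderiv ℝ φ zs w) a)) :=
        ((continuous_apply a).tendsto _).comp hsl
      have hfb : Tendsto (fun t : ℝ => φ (zs + t • w) b)
          (nhdsWithin (0:ℝ) {(0:ℝ)}ᶜ) (nhds 0) := by
        have hc : Continuous fun t : ℝ => φ (zs + t • w) b :=
          (continuous_apply b).comp (hcont.comp (continuous_const.add (continuous_id.smul continuous_const)))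
        have h1 := (hc.tendsto 0).mono_left
          (nhdsWithin_le_nhds : nhdsWithin (0:ℝ) {(0:ℝ)}ᶜ ≤ nhds 0)
        simpa [h0] using h1
      have hprod := hfa.mul hfb
      have heq : (fun t : ℝ => slope (fun s : ℝ => φ (zs + s • w)) 0 t a * φ (zs + t • w) b)
          =ᶠ[nhdsWithin (0:ℝ) {(0:ℝ)}ᶜ] (fun t => α + t * β) := by
        filter_upwards [self_mem_nhdsWithin] with t ht
        have ht' : (t:ℝ) ≠ 0 := ht
        have hslope : slope (fun s : ℝ => φ (zs + s • w)) 0 t = t⁻¹ • (φ (zs + t • w)) := by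
          rw [slope_def_module]
          simp [h0]
        rw [hslope, Pi.smul_apply, smul_eq_mul]
        calc t⁻¹ * φ (zs + t • w) a * φ (zs + t • w) b
            = t⁻¹ * (φ (zs + t • w) a * φ (zs + t • w) b) := by ring
          _ = t⁻¹ * (t * α + t^2 * β) := by rw [hpoly t]
          _ = α + t * β := by field_simp
      have h2 := hprod.congr' heq
      have h3 : Tendsto (fun t : ℝ => α + t * β) (nhdsWithin (0:ℝ) {(0:ℝ)}ᶜ) (nhds α) := by
        have hc : Continuous fun t : ℝ => α + t * β := by continuity
        have := (hc.tendsto 0).mono_left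
          (nhdsWithin_le_nhds : nhdsWithin (0:ℝ) {(0:ℝ)}ᶜ ≤ nhds 0)
        simpa using this
      have := tendsto_nhds_unique h3 h2
      simpa using this
    have h2 := hpoly 1
    rw [one_smul] at h2
    rw [hpoly t, h2, halpha]
    ring
  -- Step 5: rays
  have hray : ∀ (w : Phase n) (t : ℝ), 0 < t → φ (zs + t • w) = t • φ (zs + w) := by
    intro w t ht
    by_cases hv : φ (zs + w) = 0
    · funext u
      have h1 := hkey u u w t
      rw [hv] at h1
      have h2 : φ (zs + t • w) u = 0 := by simpa using h1
      simp [hv, h2]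
    · have hex : ∃ a, φ (zs + w) a ≠ 0 := by
        by_contra hcon
        push_neg at hcon
        exact hv (funext hcon)
      obtain ⟨a, ha⟩ := hex
      have hfa : φ (zs + t • w) a = t * φ (zs + w) a := by
        have hsq := hkey a a w t
        have hcases : φ (zs + t • w) a = t * φ (zs + w) a
            ∨ φ (zs + t • w) a = -(t * φ (zs + w) a) := by
          apply mul_self_eq_mul_self_iff.mp
          rw [hsq]; ring
        rcases hcases with h | h
        · exact h
        · exfalso
          have hcf : Continuous fun s : ℝ => φ (zs + s • w) a :=
            (continuous_apply a).comp (hcont.comp (continuous_const.add (continuous_id.smul continuous_const)))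
          have hf1 : φ (zs + (1:ℝ) • w) a = φ (zs + w) a := by rw [one_smul]
          have h0mem : (0:ℝ) ∈ Set.uIcc (φ (zs + t • w) a) (φ (zs + (1:ℝ) • w) a) := by
            rw [hf1, h]
            rcases ha.lt_or_gt with hva | hva
            · apply Set.mem_uIcc.mpr; right; constructor <;> nlinarith
            · apply Set.mem_uIcc.mpr; left; constructor <;> nlinarith
          obtain ⟨s₀, hs₀mem, hs₀⟩ := intermediate_value_uIcc hcf.continuousOn h0mem
          have hs₀pos : 0 < s₀ := by
            rcases Set.mem_uIcc.mp hs₀mem with ⟨h1, h2⟩ | ⟨h1, h2⟩ <;> linarith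
          have hc := hkey a a w s₀
          have hs₀' : φ (zs + s₀ • w) a = 0 := hs₀
          rw [hs₀'] at hc
          have h2 : s₀ ^ 2 * (φ (zs + w) a * φ (zs + w) a) = 0 := by simpa using hc.symm
          exact (mul_ne_zero (pow_ne_zero 2 hs₀pos.ne') (mul_ne_zero ha ha)) h2
      funext u
      have h1 := hkey a u w t
      rw [hfa] at h1
      have hne : t * φ (zs + w) a ≠ 0 := mul_ne_zero ht.ne' ha
      show φ (zs + t • w) u = (t • φ (zs + w)) u
      rw [Pi.smul_apply, smul_eq_mul]
      apply mul_left_cancel₀ hne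
      rw [h1]; ring
  -- Step 6: linearity
  have hlin : ∀ w : Phase n, φ (zs + w) = fderiv ℝ φ zs w := by
    intro w
    have hsl := hasDerivAt_iff_tendsto_slope.mp (hD w)
    have hsub : Set.Ioi (0:ℝ) ⊆ {(0:ℝ)}ᶜ := fun x hx =>
      Set.mem_compl_singleton_iff.mpr (ne_of_gt hx)
    have h1 : Tendsto (slope (fun s : ℝ => φ (zs + s • w)) 0)
        (nhdsWithin (0:ℝ) (Set.Ioi 0)) (nhds (fderiv ℝ φ zs w)) :=
      hsl.mono_left (nhdsWithin_mono 0 hsub)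
    have h2 : slope (fun s : ℝ => φ (zs + s • w)) 0
        =ᶠ[nhdsWithin (0:ℝ) (Set.Ioi 0)] fun _ => φ (zs + w) := by
      filter_upwards [self_mem_nhdsWithin] with t ht
      have ht' : (0:ℝ) < t := ht
      rw [slope_def_module]
      have hz : φ (zs + (0:ℝ) • w) = 0 := by
        rw [zero_smul, add_zero, h0]
      rw [hz, sub_zero, sub_zero, hray w t ht', smul_smul, inv_mul_cancel₀ ht'.ne', one_smul]
    have h3 := h1.congr' h2
    exact tendsto_nhds_unique (tendsto_const_nhds) h3
  -- Conclusion
  obtain ⟨M, hM⟩ : ∃ M : Big n, M = LinearMap.toMatrix'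
      ((fderiv ℝ φ zs : Phase n →L[ℝ] Phase n) : Phase n →ₗ[ℝ] Phase n) := ⟨_, rfl⟩
  have hMv : ∀ x : Phase n, M *ᵥ x = fderiv ℝ φ zs x := by
    intro x
    rw [hM, ← Matrix.toLin'_apply, Matrix.toLin'_toMatrix']
    rfl
  have hφz : ∀ z, φ z = M *ᵥ z - M *ᵥ zs := by
    intro z
    have h1 := hlin (z - zs)
    rw [show zs + (z - zs) = z from by abel] at h1
    rw [h1, map_sub, ← hMv, ← hMv]
  have hinj : Function.Injective fun x : Phase n => M *ᵥ x := by
    intro x y hxy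
    have e1 : φ (zs + x) = φ (zs + y) := by
      rw [hlin x, hlin y, ← hMv, ← hMv]; exact hxy
    have := hl.injective e1
    exact add_left_cancel this
  have hsurj : ∀ y : Phase n, M *ᵥ (ψ y - zs) = y := by
    intro y
    have h1 := hlin (ψ y - zs)
    rw [show zs + (ψ y - zs) = ψ y from by abel] at h1
    rw [← hMv] at h1
    rw [← h1, hr y]
  have hunit : IsUnit M := by
    have h1 : IsUnit (Matrix.toLinAlgEquiv' M) := by
      apply (Module.End.isUnit_iff _).mpr
      constructor
      · intro x y hxy
        apply hinj
        simpa [Matrix.toLinAlgEquiv'_apply] using hxy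
      · intro y
        exact ⟨ψ y - zs, by simp [Matrix.toLinAlgEquiv'_apply, hsurj y]⟩
    have h2 := h1.map (Matrix.toLinAlgEquiv'.symm : _ ≃ₐ[ℝ] _)
    rwa [AlgEquiv.symm_apply_apply] at h2
  exact ⟨M, -(M *ᵥ zs), hunit, fun z => by rw [hφz z, sub_eq_add_neg]⟩

end
end

section
/- Let φ : ℝ²ⁿ → ℝ²ⁿ be a C¹ diffeomorphism with Jacobian J(z) = |det Dφ(z)| satisfying 0 < J(z) ≤ 1 for all z ∈ ℝ²ⁿ. Let Σ ∈ Sp⁺(n), Λ ∈ Sp⁺(n) and z_Σ ∈ ℝ²ⁿ be such that ln J(z) − 2π·φ(z)·Σ⁻¹φ(z) = −2π·(z − z_Σ)·Λ⁻¹(z − z_Σ) for all z ∈ ℝ²ⁿ. Then φ(z_Σ) = 0, i.e. z_Σ = φ⁻¹(0); in particular z_Σ does not depend on the choice of Σ. -/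
open MeasureTheory Complex Filter Matrix

noncomputable section

/-- the centre of the transformed Gaussian is φ⁻¹(0). -/
theorem stmt18 (n : ℕ) (φ ψ : Phase n → Phase n)
    (hφ : ContDiff ℝ 1 φ) (hψ : ContDiff ℝ 1 ψ)
    (hl : Function.LeftInverse ψ φ) (hr : Function.RightInverse ψ φ)
    (hJ : ∀ z, 0 < jac n φ z ∧ jac n φ z ≤ 1)
    (Sig Lam : Matrix (Fin n ⊕ Fin n) (Fin n ⊕ Fin n) ℝ) (zS : Phase n)
    (hSig : InSpPlus n Sig) (hLam : InSpPlus n Lam)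
    (heq : ∀ z,
      Real.log (jac n φ z) - 2 * Real.pi * (φ z ⬝ᵥ (Sig⁻¹.mulVec (φ z))) =
        -(2 * Real.pi) * ((z - zS) ⬝ᵥ (Lam⁻¹.mulVec (z - zS)))) :
    φ zS = 0 ∧ zS = ψ 0 := by
  have hinv : Sig⁻¹.PosDef := hSig.2.2.inv
  have h0 : φ zS = 0 := by
    by_contra h
    have hq := hinv.dotProduct_mulVec_pos (x := φ zS) h
    simp only [star, id] at hq
    have he := heq zS
    simp only [sub_self] at he
    rw [zero_dotProduct] at he
    have hlog : Real.log (jac n φ zS) ≤ 0 :=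
      Real.log_nonpos (le_of_lt (hJ zS).1) (hJ zS).2
    have hpi : (0:ℝ) < 2 * Real.pi := by positivity
    nlinarith [hq, hlog, he]
  exact ⟨h0, by rw [← h0, hl zS]⟩

end
end
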